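/- arXiv:2012.13079 — 6 statements merged into one kernel-verified Lean document; each statement's English description precedes it below -/
import Mathlib

section
/- Let α ∈ [0,1) and let C_{n+2} be the cycle on n+2 vertices. With φ(H_n) as above (determinant of the n×n tridiagonal matrix with diagonal entries λ−2α and off-diagonal entries α−1), the A_α-characteristic polynomial of the cycle satisfies φ(C_{n+2}) = (λ−2α)·φ(H_{n+1}) − 2(α−1)^2·φ(H_n) + 2(−1)^{n+1}(α−1)^{n+2} for all n ≥ 1. -/
open Matrix

/-- `λ I - A_α(P_n)` for the path `P_n`: tridiagonal, diagonal `λ-2α` except the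
two end entries `λ-α`, off-diagonal entries `α-1`. -/
noncomputable def Pmat (α lam : ℝ) (n : ℕ) : Matrix (Fin n) (Fin n) ℝ :=
  Matrix.of fun i j =>
    if i = j then (if i.val = 0 ∨ i.val = n - 1 then lam - α else lam - 2*α)
    else if i.val + 1 = j.val ∨ j.val + 1 = i.val then α - 1 else 0

/-- `B_n`: obtained from `λ I - A_α(P_{n+1})` by deleting the row/column of one end
vertex: tridiagonal with diagonal `λ-2α` except the last entry `λ-α`. -/
noncomputable def Bmat (α lam : ℝ) (n : ℕ) : Matrix (Fin n) (Fin n) ℝ :=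
  Matrix.of fun i j =>
    if i = j then (if i.val = n - 1 then lam - α else lam - 2*α)
    else if i.val + 1 = j.val ∨ j.val + 1 = i.val then α - 1 else 0

/-- `H_n`: tridiagonal with all diagonal entries `λ-2α`, off-diagonal `α-1`. -/
noncomputable def Hmat (α lam : ℝ) (n : ℕ) : Matrix (Fin n) (Fin n) ℝ :=
  Matrix.of fun i j =>
    if i = j then lam - 2*α
    else if i.val + 1 = j.val ∨ j.val + 1 = i.val then α - 1 else 0

noncomputable def phiP (α lam : ℝ) (n : ℕ) : ℝ :=
  if n = 0 then (1 - 2*α)/(1-α)^2 else (Pmat α lam n).det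

noncomputable def phiB (α lam : ℝ) (n : ℕ) : ℝ :=
  if n = 0 then 1 else (Bmat α lam n).det

noncomputable def phiH (α lam : ℝ) (n : ℕ) : ℝ :=
  if n = 0 then 1 else (Hmat α lam n).det

/-- `λ I - A_α(C_m)` for the cycle `C_m` (`m ≥ 3`): diagonal `λ-2α`, entry `α-1`
between cyclically consecutive vertices. -/
noncomputable def Cmat (α lam : ℝ) (m : ℕ) : Matrix (Fin m) (Fin m) ℝ :=
  Matrix.of fun i j =>
    if i = j then lam - 2*α
    else if (i.val + 1) % m = j.val ∨ (j.val + 1) % m = i.val then α - 1 else 0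

section aux

lemma val_succAbove' {n : ℕ} (p : Fin (n+1)) (i : Fin n) :
    (p.succAbove i).val = if i.val < p.val then i.val else i.val + 1 := by
  rcases lt_or_ge (Fin.castSucc i) p with h | h
  · rw [Fin.succAbove_of_castSucc_lt _ _ h]
    simp only [Fin.lt_def, Fin.coe_castSucc] at h
    simp [if_pos h]
  · rw [Fin.succAbove_of_le_castSucc _ _ h]
    have h' : p.val ≤ i.val := by simpa [Fin.le_def] using h
    rw [if_neg (by omega)]
    rfl

lemma val_zero'' (m : ℕ) : ((0 : Fin (m+1)) : ℕ) = 0 := by simp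

lemma val_last'' (m : ℕ) : ((Fin.last m : Fin (m+1)) : ℕ) = m := by simp

lemma Cmat_apply' (α lam : ℝ) (n : ℕ) (i j : Fin (n+2)) :
    Cmat α lam (n+2) i j =
      if i.val = j.val then lam - 2*α
      else if i.val + 1 = j.val ∨ j.val + 1 = i.val ∨ (i.val = n+1 ∧ j.val = 0)
          ∨ (j.val = n+1 ∧ i.val = 0) then α - 1 else 0 := by
  have hi := i.isLt
  have hj := j.isLt
  have h1 : (i.val + 1) % (n+2) = if i.val = n+1 then 0 else i.val + 1 := by
    split_ifs with h
    · rw [h]; exact Nat.mod_self _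
    · exact Nat.mod_eq_of_lt (by omega)
  have h2 : (j.val + 1) % (n+2) = if j.val = n+1 then 0 else j.val + 1 := by
    split_ifs with h
    · rw [h]; exact Nat.mod_self _
    · exact Nat.mod_eq_of_lt (by omega)
  simp only [Cmat, Matrix.of_apply, h1, h2, Fin.ext_iff]
  split_ifs <;> first | rfl | omega | ((simp only [and_false, false_and, or_false, false_or, and_true, true_and, or_true, true_or, not_true, not_false_eq_true] at *) <;> omega)

lemma Hmat_apply' (α lam : ℝ) (n : ℕ) (i j : Fin n) :
    Hmat α lam n i j = if i.val = j.val then lam - 2*α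
      else if i.val + 1 = j.val ∨ j.val + 1 = i.val then α - 1 else 0 := by
  simp only [Hmat, Matrix.of_apply, Fin.ext_iff]

lemma minor_zero (α lam : ℝ) (n : ℕ) :
    (Cmat α lam (n+2)).submatrix Fin.succ ((0 : Fin (n+2)).succAbove)
      = Hmat α lam (n+1) := by
  ext i j
  have hi := i.isLt; have hj := j.isLt
  simp only [Matrix.submatrix_apply, Cmat_apply', Hmat_apply', val_succAbove',
    Fin.val_succ, val_zero'']
  split_ifs <;> first | rfl | omega | ((simp only [and_false, false_and, or_false, false_or, and_true, true_and, or_true, true_or, not_true, not_false_eq_true] at *) <;> omega)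

lemma detM1 (α lam : ℝ) (n : ℕ) (hn : 1 ≤ n) :
    ((Cmat α lam (n+2)).submatrix Fin.succ ((1 : Fin (n+2)).succAbove)).det
      = (α-1) * (Hmat α lam n).det + (-1)^n * (α-1)^(n+1) := by
  have hone : (1 : Fin (n+2)).val = 1 := rfl
  rw [Matrix.det_succ_column_zero]
  have hzero : ∀ x : Fin (n+1), x ∉ ({0, Fin.last n} : Finset (Fin (n+1))) →
      (-1:ℝ)^(x:ℕ) * ((Cmat α lam (n+2)).submatrix Fin.succ ((1 : Fin (n+2)).succAbove)) x 0
        * (((Cmat α lam (n+2)).submatrix Fin.succ ((1 : Fin (n+2)).succAbove)).submatrix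
            x.succAbove Fin.succ).det = 0 := by
    intro x hx
    simp only [Finset.mem_insert, Finset.mem_singleton, Fin.ext_iff, Fin.val_zero,
      Fin.val_last, not_or] at hx
    have hxlt := x.isLt
    have : ((Cmat α lam (n+2)).submatrix Fin.succ ((1 : Fin (n+2)).succAbove)) x 0 = 0 := by
      simp only [Matrix.submatrix_apply, Cmat_apply', val_succAbove', Fin.val_succ,
        Fin.val_zero, hone]
      split_ifs <;> first | rfl | omega | ((simp only [and_false, false_and, or_false, false_or, and_true, true_and, or_true, true_or, not_true, not_false_eq_true] at *) <;> omega)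
    rw [this, mul_zero, zero_mul]
  rw [← Finset.sum_subset (Finset.subset_univ ({0, Fin.last n} : Finset (Fin (n+1))))
      (fun x _ hx => hzero x hx)]
  have hne : (0 : Fin (n+1)) ≠ Fin.last n := by
    simp only [ne_eq, Fin.ext_iff, Fin.val_zero, Fin.val_last]; omega
  rw [Finset.sum_insert (by simpa using hne), Finset.sum_singleton]
  -- entry values
  have e1 : ((Cmat α lam (n+2)).submatrix Fin.succ ((1 : Fin (n+2)).succAbove)) 0 0 = α - 1 := by
    simp only [Matrix.submatrix_apply, Cmat_apply', val_succAbove', Fin.val_succ,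
      Fin.val_zero, hone]
    split_ifs <;> first | rfl | omega | ((simp only [and_false, false_and, or_false, false_or, and_true, true_and, or_true, true_or, not_true, not_false_eq_true] at *) <;> omega)
  have e2 : ((Cmat α lam (n+2)).submatrix Fin.succ ((1 : Fin (n+2)).succAbove)) (Fin.last n) 0
      = α - 1 := by
    simp only [Matrix.submatrix_apply, Cmat_apply', val_succAbove', Fin.val_succ,
      Fin.val_zero, Fin.val_last, hone]
    split_ifs <;> first | rfl | omega | ((simp only [and_false, false_and, or_false, false_or, and_true, true_and, or_true, true_or, not_true, not_false_eq_true] at *) <;> omega)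
  -- first minor is Hmat n
  have m1 : (((Cmat α lam (n+2)).submatrix Fin.succ ((1 : Fin (n+2)).succAbove)).submatrix
      ((0 : Fin (n+1)).succAbove) Fin.succ) = Hmat α lam n := by
    ext a b
    have ha := a.isLt; have hb := b.isLt
    simp only [Matrix.submatrix_apply, Cmat_apply', Hmat_apply', val_succAbove',
      Fin.val_succ, val_zero'', hone]
    split_ifs <;> first | rfl | omega | ((simp only [and_false, false_and, or_false, false_or, and_true, true_and, or_true, true_or, not_true, not_false_eq_true] at *) <;> omega)
  -- second minor is lower triangular with diagonal α-1
  have m2 : (((Cmat α lam (n+2)).submatrix Fin.succ ((1 : Fin (n+2)).succAbove)).submatrix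
      ((Fin.last n).succAbove) Fin.succ).det = (α-1)^n := by
    set T := (((Cmat α lam (n+2)).submatrix Fin.succ ((1 : Fin (n+2)).succAbove)).submatrix
      ((Fin.last n).succAbove) Fin.succ) with hT
    have htri : T.BlockTriangular OrderDual.toDual := by
      intro a b hab
      have hab' : a.val < b.val := hab
      have ha := a.isLt; have hb := b.isLt
      simp only [hT, Matrix.submatrix_apply, Cmat_apply', val_succAbove', Fin.val_succ,
        Fin.val_last, hone]
      split_ifs <;> first | rfl | omega | ((simp only [and_false, false_and, or_false, false_or, and_true, true_and, or_true, true_or, not_true, not_false_eq_true] at *) <;> omega)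
    rw [Matrix.det_of_lowerTriangular T htri]
    have hdiag : ∀ a : Fin n, T a a = α - 1 := by
      intro a
      have ha := a.isLt
      simp only [hT, Matrix.submatrix_apply, Cmat_apply', val_succAbove', Fin.val_succ,
        Fin.val_last, hone]
      split_ifs <;> first | rfl | omega | ((simp only [and_false, false_and, or_false, false_or, and_true, true_and, or_true, true_or, not_true, not_false_eq_true] at *) <;> omega)
    rw [Finset.prod_congr rfl (fun a _ => hdiag a), Finset.prod_const]
    simp
  rw [e1, e2, m1, m2]
  simp [Fin.val_last]
  ring

lemma detM2 (α lam : ℝ) (n : ℕ) (hn : 1 ≤ n) :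
    ((Cmat α lam (n+2)).submatrix Fin.succ ((Fin.last (n+1)).succAbove)).det
      = (α-1)^(n+1) + (-1)^n * (α-1) * (Hmat α lam n).det := by
  rw [Matrix.det_succ_column_zero]
  have hzero : ∀ x : Fin (n+1), x ∉ ({0, Fin.last n} : Finset (Fin (n+1))) →
      (-1:ℝ)^(x:ℕ) * ((Cmat α lam (n+2)).submatrix Fin.succ ((Fin.last (n+1)).succAbove)) x 0
        * (((Cmat α lam (n+2)).submatrix Fin.succ ((Fin.last (n+1)).succAbove)).submatrix
            x.succAbove Fin.succ).det = 0 := by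
    intro x hx
    simp only [Finset.mem_insert, Finset.mem_singleton, Fin.ext_iff, Fin.val_zero,
      Fin.val_last, not_or] at hx
    have hxlt := x.isLt
    have : ((Cmat α lam (n+2)).submatrix Fin.succ ((Fin.last (n+1)).succAbove)) x 0 = 0 := by
      simp only [Matrix.submatrix_apply, Cmat_apply', val_succAbove', Fin.val_succ,
        val_zero'', val_last'']
      split_ifs <;> first | rfl | omega | ((simp only [and_false, false_and, or_false, false_or, and_true, true_and, or_true, true_or, not_true, not_false_eq_true] at *) <;> omega)
    rw [this, mul_zero, zero_mul]
  rw [← Finset.sum_subset (Finset.subset_univ ({0, Fin.last n} : Finset (Fin (n+1))))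
      (fun x _ hx => hzero x hx)]
  have hne : (0 : Fin (n+1)) ≠ Fin.last n := by
    simp only [ne_eq, Fin.ext_iff, Fin.val_zero, Fin.val_last]; omega
  rw [Finset.sum_insert (by simpa using hne), Finset.sum_singleton]
  have e1 : ((Cmat α lam (n+2)).submatrix Fin.succ ((Fin.last (n+1)).succAbove)) 0 0 = α - 1 := by
    simp only [Matrix.submatrix_apply, Cmat_apply', val_succAbove', Fin.val_succ,
      Fin.val_zero, Fin.val_last]
    split_ifs <;> first | rfl | omega | ((simp only [and_false, false_and, or_false, false_or, and_true, true_and, or_true, true_or, not_true, not_false_eq_true] at *) <;> omega)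
  have e2 : ((Cmat α lam (n+2)).submatrix Fin.succ ((Fin.last (n+1)).succAbove)) (Fin.last n) 0
      = α - 1 := by
    simp only [Matrix.submatrix_apply, Cmat_apply', val_succAbove', Fin.val_succ,
      val_zero'', val_last'']
    split_ifs <;> first | rfl | omega | ((simp only [and_false, false_and, or_false, false_or, and_true, true_and, or_true, true_or, not_true, not_false_eq_true] at *) <;> omega)
  -- first minor is upper triangular with diagonal α-1
  have m1 : (((Cmat α lam (n+2)).submatrix Fin.succ ((Fin.last (n+1)).succAbove)).submatrix
      ((0 : Fin (n+1)).succAbove) Fin.succ).det = (α-1)^n := by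
    set T := (((Cmat α lam (n+2)).submatrix Fin.succ ((Fin.last (n+1)).succAbove)).submatrix
      ((0 : Fin (n+1)).succAbove) Fin.succ) with hT
    have htri : T.BlockTriangular id := by
      intro a b hab
      have hab' : b.val < a.val := hab
      have ha := a.isLt; have hb := b.isLt
      simp only [hT, Matrix.submatrix_apply, Cmat_apply', val_succAbove', Fin.val_succ,
        val_zero'', val_last'']
      split_ifs <;> first | rfl | omega | ((simp only [and_false, false_and, or_false, false_or, and_true, true_and, or_true, true_or, not_true, not_false_eq_true] at *) <;> omega)
    rw [Matrix.det_of_upperTriangular htri]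
    have hdiag : ∀ a : Fin n, T a a = α - 1 := by
      intro a
      have ha := a.isLt
      simp only [hT, Matrix.submatrix_apply, Cmat_apply', val_succAbove', Fin.val_succ,
        val_zero'', val_last'']
      split_ifs <;> first | rfl | omega | ((simp only [and_false, false_and, or_false, false_or, and_true, true_and, or_true, true_or, not_true, not_false_eq_true] at *) <;> omega)
    rw [Finset.prod_congr rfl (fun a _ => hdiag a), Finset.prod_const]
    simp
  -- second minor is Hmat n
  have m2 : (((Cmat α lam (n+2)).submatrix Fin.succ ((Fin.last (n+1)).succAbove)).submatrix
      ((Fin.last n).succAbove) Fin.succ) = Hmat α lam n := by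
    ext a b
    have ha := a.isLt; have hb := b.isLt
    simp only [Matrix.submatrix_apply, Cmat_apply', Hmat_apply', val_succAbove',
      Fin.val_succ, Fin.val_zero, Fin.val_last]
    split_ifs <;> first | rfl | omega | ((simp only [and_false, false_and, or_false, false_or, and_true, true_and, or_true, true_or, not_true, not_false_eq_true] at *) <;> omega)
  rw [e1, e2, m1, m2]
  simp [Fin.val_last]
  ring

end aux

theorem stmt4 (α : ℝ) (hα : α ∈ Set.Ico (0:ℝ) 1) :
    ∀ (lam : ℝ) (n : ℕ), 1 ≤ n →
      (Cmat α lam (n+2)).det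
        = (lam - 2*α) * phiH α lam (n+1) - 2*(α-1)^2 * phiH α lam n
          + 2*(-1)^(n+1)*(α-1)^(n+2) := by
  intro lam n hn
  have hphi1 : phiH α lam (n+1) = (Hmat α lam (n+1)).det := by
    rw [phiH, if_neg (by omega)]
  have hphi : phiH α lam n = (Hmat α lam n).det := by
    rw [phiH, if_neg (by omega)]
  rw [Matrix.det_succ_row_zero]
  have hzero : ∀ j : Fin (n+2), j ∉ ({0, 1, Fin.last (n+1)} : Finset (Fin (n+2))) →
      (-1:ℝ)^(j:ℕ) * Cmat α lam (n+2) 0 j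
        * ((Cmat α lam (n+2)).submatrix Fin.succ j.succAbove).det = 0 := by
    intro j hj
    simp only [Finset.mem_insert, Finset.mem_singleton, Fin.ext_iff, Fin.val_zero,
      Fin.val_one, Fin.val_last, not_or] at hj
    have hjlt := j.isLt
    have : Cmat α lam (n+2) 0 j = 0 := by
      rw [Cmat_apply']
      simp only [Fin.val_zero]
      split_ifs <;> first | rfl | omega | ((simp only [and_false, false_and, or_false, false_or, and_true, true_and, or_true, true_or, not_true, not_false_eq_true] at *) <;> omega)
    rw [this, mul_zero, zero_mul]
  rw [← Finset.sum_subset (Finset.subset_univ ({0, 1, Fin.last (n+1)} : Finset (Fin (n+2))))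
      (fun x _ hx => hzero x hx)]
  have h01 : (0 : Fin (n+2)) ≠ 1 := by
    simp [Fin.ext_iff]
  have h0l : (0 : Fin (n+2)) ≠ Fin.last (n+1) := by
    simp only [ne_eq, Fin.ext_iff, Fin.val_zero, Fin.val_last]; omega
  have h1l : (1 : Fin (n+2)) ≠ Fin.last (n+1) := by
    simp only [ne_eq, Fin.ext_iff, Fin.val_one, Fin.val_last]; omega
  rw [Finset.sum_insert (by simp [h01, h0l]), Finset.sum_insert (by simpa using h1l),
    Finset.sum_singleton]
  have c0 : Cmat α lam (n+2) 0 0 = lam - 2*α := by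
    rw [Cmat_apply']; simp
  have c1 : Cmat α lam (n+2) 0 1 = α - 1 := by
    rw [Cmat_apply']
    simp only [Fin.val_zero, Fin.val_one]
    split_ifs <;> first | rfl | omega | ((simp only [and_false, false_and, or_false, false_or, and_true, true_and, or_true, true_or, not_true, not_false_eq_true] at *) <;> omega)
  have cl : Cmat α lam (n+2) 0 (Fin.last (n+1)) = α - 1 := by
    rw [Cmat_apply']
    simp only [Fin.val_zero, Fin.val_last]
    split_ifs <;> first | rfl | omega | ((simp only [and_false, false_and, or_false, false_or, and_true, true_and, or_true, true_or, not_true, not_false_eq_true] at *) <;> omega)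
  rw [c0, c1, cl, minor_zero, detM1 α lam n hn, detM2 α lam n hn, hphi1, hphi]
  simp only [Fin.val_zero, Fin.val_one, Fin.val_last, pow_zero, pow_one]
  have hsq : ((-1:ℝ))^n * (-1)^n = 1 := by
    rw [← mul_pow]; norm_num
  linear_combination (-(α-1)^2 * (Hmat α lam n).det) * hsq
end

section
/- Fix α ∈ [0,1) and a real λ > 2 with λ not a root of any φ(P_n). With φ(P_n) and φ(B_n) defined as above, and h(λ)_α = (λ − Δ)/(2α(λ−2) + 2) where Δ = √((λ−4α+2)(λ−2)), the limit lim_{n→∞} φ(B_{n−1})/φ(P_n) exists and equals h(λ)_α. -/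
open Matrix

noncomputable def tri (d : ℕ → ℝ) (b : ℝ) (n : ℕ) : Matrix (Fin n) (Fin n) ℝ :=
  Matrix.of fun i j => if i = j then d i.val
    else if i.val + 1 = j.val ∨ j.val + 1 = i.val then b else 0

lemma tri_det_rec (d : ℕ → ℝ) (b : ℝ) (n : ℕ) :
    (tri d b (n+2)).det =
      d 0 * (tri (fun k => d (k+1)) b (n+1)).det
      - b^2 * (tri (fun k => d (k+2)) b n).det := by
  have h1 : (tri d b (n+2)).submatrix Fin.succ ((0 : Fin (n+2)).succAbove)
      = tri (fun k => d (k+1)) b (n+1) := by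
    ext i j
    simp only [tri, submatrix_apply, of_apply, Fin.succAbove_zero, Fin.val_succ, Fin.ext_iff]
    split_ifs <;> first | rfl | omega | simp_all | (exfalso; omega)
  have h2 : ((tri d b (n+2)).submatrix Fin.succ ((1 : Fin (n+2)).succAbove)).submatrix
      ((0 : Fin (n+1)).succAbove) Fin.succ = tri (fun k => d (k+2)) b n := by
    ext i j
    have hr : ((1 : Fin (n+2)).succAbove j.succ).val = j.val + 2 := by
      rw [Fin.succAbove]
      split_ifs with h
      · exact absurd h (by simp [Fin.lt_iff_val_lt_val])
      · simp
    simp only [tri, submatrix_apply, of_apply, Fin.succAbove_zero, Fin.val_succ, Fin.ext_iff, hr]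
    split_ifs <;> first | rfl | omega | simp_all | (exfalso; omega)
  have hz : ∀ j : Fin n, (tri d b (n+2)) 0 j.succ.succ = 0 := by
    intro j
    simp only [tri, of_apply, Fin.ext_iff, Fin.val_succ, Fin.val_zero]
    split_ifs <;> first | rfl | omega | simp_all | (exfalso; omega)
  rw [det_succ_row_zero, Fin.sum_univ_succ, Fin.sum_univ_succ]
  rw [Finset.sum_eq_zero (fun j _ => by rw [hz j]; ring)]
  rw [h1]
  set N := (tri d b (n+2)).submatrix Fin.succ ((1 : Fin (n+2)).succAbove) with hN
  have hNz : ∀ i : Fin n, N i.succ 0 = 0 := by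
    intro i
    have : ((1 : Fin (n+2)).succAbove 0).val = 0 := by
      rw [Fin.succAbove]
      split_ifs with h
      · simp
      · exact absurd (by simp [Fin.lt_iff_val_lt_val]) h
    simp only [hN, tri, submatrix_apply, of_apply, Fin.ext_iff, Fin.val_succ, this]
    split_ifs <;> first | rfl | omega | simp_all | (exfalso; omega)
  have hN00 : N 0 0 = b := by
    have : ((1 : Fin (n+2)).succAbove 0).val = 0 := by
      rw [Fin.succAbove]
      split_ifs with h
      · simp
      · exact absurd (by simp [Fin.lt_iff_val_lt_val]) h
    simp only [hN, tri, submatrix_apply, of_apply, Fin.ext_iff, Fin.val_succ, this]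
    split_ifs <;> first | rfl | omega | simp_all | (exfalso; omega)
  have hdetN : N.det = b * (tri (fun k => d (k+2)) b n).det := by
    rw [det_succ_column_zero, Fin.sum_univ_succ]
    rw [Finset.sum_eq_zero (fun i _ => by rw [hNz i]; ring), hN00, h2]
    simp
  have hd0 : (tri d b (n+2)) 0 0 = d 0 := by simp [tri]
  have hd1 : (tri d b (n+2)) 0 1 = b := by
    simp only [tri, of_apply, Fin.ext_iff, Fin.val_zero, Fin.val_one]
    split_ifs <;> first | rfl | omega | simp_all | (exfalso; omega)
  have e1 : Fin.succ (0 : Fin (n+1)) = 1 := rfl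
  rw [e1, hdetN, hd0, hd1]
  simp only [Fin.val_zero, Fin.val_one, pow_zero, pow_one]
  ring

lemma Bmat_eq_tri (α lam : ℝ) (n : ℕ) :
    Bmat α lam n = tri (fun k => if k = n - 1 then lam - α else lam - 2*α) (α-1) n := rfl

lemma Pmat_eq_tri (α lam : ℝ) (n : ℕ) :
    Pmat α lam n
      = tri (fun k => if k = 0 ∨ k = n - 1 then lam - α else lam - 2*α) (α-1) n := rfl

lemma tri_congr (d d' : ℕ → ℝ) (b : ℝ) (n : ℕ) (h : ∀ k < n, d k = d' k) :
    tri d b n = tri d' b n := by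
  ext i j
  simp only [tri, of_apply]
  rcases eq_or_ne i j with rfl | hij
  · simp [h i.val i.isLt]
  · simp [hij]

lemma detB_rec (α lam : ℝ) (n : ℕ) :
    (Bmat α lam (n+2)).det
      = (lam - 2*α) * (Bmat α lam (n+1)).det - (α-1)^2 * (Bmat α lam n).det := by
  rw [Bmat_eq_tri, tri_det_rec]
  have e1 : tri (fun k => if k + 1 = (n+2) - 1 then lam - α else lam - 2*α) (α-1) (n+1)
      = Bmat α lam (n+1) := by
    rw [Bmat_eq_tri]
    exact tri_congr _ _ _ _ (fun k hk => if_congr (by omega) rfl rfl)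
  have e2 : tri (fun k => if k + 2 = (n+2) - 1 then lam - α else lam - 2*α) (α-1) n
      = Bmat α lam n := by
    rw [Bmat_eq_tri]
    exact tri_congr _ _ _ _ (fun k hk => if_congr (by omega) rfl rfl)
  rw [e1, e2]
  norm_num

lemma detP_rec (α lam : ℝ) (n : ℕ) :
    (Pmat α lam (n+2)).det
      = (lam - α) * (Bmat α lam (n+1)).det - (α-1)^2 * (Bmat α lam n).det := by
  rw [Pmat_eq_tri, tri_det_rec]
  have e1 : tri (fun k => if k + 1 = 0 ∨ k + 1 = (n+2) - 1 then lam - α else lam - 2*α)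
      (α-1) (n+1) = Bmat α lam (n+1) := by
    rw [Bmat_eq_tri]
    exact tri_congr _ _ _ _ (fun k hk => if_congr (by omega) rfl rfl)
  have e2 : tri (fun k => if k + 2 = 0 ∨ k + 2 = (n+2) - 1 then lam - α else lam - 2*α)
      (α-1) n = Bmat α lam n := by
    rw [Bmat_eq_tri]
    exact tri_congr _ _ _ _ (fun k hk => if_congr (by omega) rfl rfl)
  rw [e1, e2]
  norm_num

lemma phiB_eq_det (α lam : ℝ) (n : ℕ) : phiB α lam n = (Bmat α lam n).det := by
  cases n with
  | zero => simp [phiB, Matrix.det_fin_zero]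
  | succ m => simp [phiB]

lemma phiB_zero (α lam : ℝ) : phiB α lam 0 = 1 := by simp [phiB]

lemma phiB_one (α lam : ℝ) : phiB α lam 1 = lam - α := by
  rw [phiB_eq_det, Matrix.det_fin_one]
  simp [Bmat]

lemma phiB_rec (α lam : ℝ) (n : ℕ) :
    phiB α lam (n+2) = (lam - 2*α) * phiB α lam (n+1) - (α-1)^2 * phiB α lam n := by
  simp only [phiB_eq_det]
  exact detB_rec α lam n

lemma phiP_rec (α lam : ℝ) (n : ℕ) :
    phiP α lam (n+2) = (lam - α) * phiB α lam (n+1) - (α-1)^2 * phiB α lam n := by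
  simp only [phiB_eq_det, phiP]
  exact detP_rec α lam n

theorem stmt7 (α lam : ℝ) (hα : α ∈ Set.Ico (0:ℝ) 1) (hlam : 2 < lam)
    (hroot : ∀ n : ℕ, 1 ≤ n → phiP α lam n ≠ 0) :
    Filter.Tendsto (fun n : ℕ => phiB α lam n / phiP α lam (n+1)) Filter.atTop
      (nhds ((lam - Real.sqrt ((lam - 4*α + 2)*(lam - 2)))
              / (2*α*(lam - 2) + 2))) := by
  obtain ⟨hα0, hα1⟩ := hα
  set Δ := Real.sqrt ((lam - 4*α + 2)*(lam - 2)) with hΔ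
  have hprod_pos : 0 < (lam - 4*α + 2)*(lam - 2) := by nlinarith
  have hΔpos : 0 < Δ := Real.sqrt_pos.mpr hprod_pos
  have hΔsq : Δ^2 = (lam - 4*α + 2)*(lam - 2) := Real.sq_sqrt hprod_pos.le
  set s := (lam - 2*α + Δ)/2 with hs
  set t := (lam - 2*α - Δ)/2 with ht
  have hst_prod : s * t = (1-α)^2 := by
    have : s * t = ((lam-2*α)^2 - Δ^2)/4 := by ring
    rw [this, hΔsq]; ring
  have ht_pos : 0 < t := by
    have h1 : Δ < lam - 2*α := by nlinarith
    simp only [ht]; linarith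
  have hs_pos : 0 < s := by simp only [hs]; linarith
  have hts : t < s := by simp only [hs, ht]; linarith
  have hs_ne : s ≠ 0 := hs_pos.ne'
  have hΔ_ne : Δ ≠ 0 := hΔpos.ne'
  have hs2 : s^2 = (lam - 2*α)*s - (1-α)^2 := by rw [← hst_prod]; simp only [hs, ht]; ring
  have ht2 : t^2 = (lam - 2*α)*t - (1-α)^2 := by rw [← hst_prod]; simp only [hs, ht]; ring
  have hdiff : s - t = Δ := by simp only [hs, ht]; ring
  have hsum : s + t = lam - 2*α := by simp only [hs, ht]; ring
  clear hs ht
  clear_value s t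
  -- explicit formula for phiB
  have hform : ∀ n : ℕ, phiB α lam n = ((s+α)*s^n - (t+α)*t^n)/Δ := by
    have key : ∀ n : ℕ, phiB α lam n = ((s+α)*s^n - (t+α)*t^n)/Δ ∧
        phiB α lam (n+1) = ((s+α)*s^(n+1) - (t+α)*t^(n+1))/Δ := by
      intro n
      induction n with
      | zero =>
        constructor
        · rw [phiB_zero]
          have : (s+α)*s^0 - (t+α)*t^0 = Δ := by simp only [pow_zero]; linarith
          rw [this, div_self hΔ_ne]
        · rw [phiB_one]
          have : (s+α)*s^1 - (t+α)*t^1 = (lam - α)*Δ := by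
            have h' : (s+α)*s^1 - (t+α)*t^1 = (s+t+α)*(s-t) := by ring
            rw [h', hdiff, hsum]; ring
          rw [this, mul_div_assoc, div_self hΔ_ne, mul_one]
      | succ m ih =>
        refine ⟨ih.2, ?_⟩
        rw [phiB_rec, ih.1, ih.2]
        rw [show s^(m+1+1) = s^m * s^2 by ring, show t^(m+1+1) = t^m * t^2 by ring,
          hs2, ht2, show s^(m+1) = s^m * s by ring, show t^(m+1) = t^m * t by ring]
        ring
    exact fun n => (key n).1
  -- g n = phiB n / s^n
  have hg_eq : ∀ n : ℕ, phiB α lam n / s^n = ((s+α) - (t+α)*(t/s)^n)/Δ := by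
    intro n
    rw [hform n, div_pow]
    have hsn : s^n ≠ 0 := pow_ne_zero n hs_ne
    field_simp
  have hA_lim : Filter.Tendsto (fun n : ℕ => phiB α lam n / s^n) Filter.atTop
      (nhds ((s+α)/Δ)) := by
    have h0 : Filter.Tendsto (fun n : ℕ => (t/s)^n) Filter.atTop (nhds 0) := by
      apply tendsto_pow_atTop_nhds_zero_of_lt_one (div_nonneg ht_pos.le hs_pos.le)
      rw [div_lt_one hs_pos]; exact hts
    have := (((h0.const_mul (t+α)).const_sub (s+α)).div_const Δ)
    simp only [mul_zero, sub_zero] at this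
    exact this.congr (fun n => (hg_eq n).symm)
  have hdivdiv : ∀ a b c : ℝ, c ≠ 0 → (a/c)/(b/c) = a/b := by
    intro a b c hc
    rcases eq_or_ne b 0 with rfl | hb
    · simp
    · field_simp
  set A := (s+α)/Δ with hAdef
  have hA_pos : 0 < A := div_pos (by linarith) hΔpos
  have hg1 : Filter.Tendsto (fun n : ℕ => phiB α lam (n+1) / s^(n+1)) Filter.atTop
      (nhds A) := (Filter.tendsto_add_atTop_iff_nat 1).mpr hA_lim
  have hden_lim : Filter.Tendsto
      (fun n : ℕ => (lam - α) * (phiB α lam (n+1)/s^(n+1)) - t * (phiB α lam n/s^n))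
      Filter.atTop (nhds ((lam-α)*A - t*A)) :=
    (hg1.const_mul _).sub (hA_lim.const_mul _)
  have hlam_t : lam - α - t = (lam + Δ)/2 := by linarith
  have hlamΔ_pos : 0 < lam + Δ := by linarith
  have hden_eq : (lam-α)*A - t*A = A * ((lam+Δ)/2) := by rw [← hlam_t]; ring
  have hden_ne : (lam-α)*A - t*A ≠ 0 := by
    rw [hden_eq]; exact (mul_pos hA_pos (by linarith)).ne'
  have hq : Filter.Tendsto (fun n : ℕ => (phiB α lam (n+1)/s^(n+1)) /
      ((lam - α)*(phiB α lam (n+1)/s^(n+1)) - t*(phiB α lam n/s^n))) Filter.atTop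
      (nhds (A / ((lam-α)*A - t*A))) := hg1.div hden_lim hden_ne
  have heq : ∀ n : ℕ, phiB α lam (n+1) / phiP α lam (n+2)
      = (phiB α lam (n+1)/s^(n+1)) /
        ((lam - α)*(phiB α lam (n+1)/s^(n+1)) - t*(phiB α lam n/s^n)) := by
    intro n
    have hP : phiP α lam (n+2) = (lam-α)*phiB α lam (n+1) - (α-1)^2 * phiB α lam n :=
      phiP_rec α lam n
    have e : (lam - α)*(phiB α lam (n+1)/s^(n+1)) - t*(phiB α lam n/s^n)
        = phiP α lam (n+2) / s^(n+1) := by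
      rw [hP, show (α-1)^2 = (1-α)^2 by ring, ← hst_prod]
      field_simp
      ring
    rw [e, hdivdiv _ _ _ (pow_ne_zero _ hs_ne)]
  have hval : A / ((lam-α)*A - t*A) = (lam - Δ) / (2*α*(lam-2) + 2) := by
    rw [hden_eq, div_mul_eq_div_div, div_self hA_pos.ne']
    rw [one_div, ← one_div, div_div_eq_mul_div, one_mul]
    rw [div_eq_div_iff (by linarith) (by nlinarith)]
    linear_combination hΔsq
  rw [← hval]
  have hfin := hq.congr (fun n => (heq n).symm)
  exact (Filter.tendsto_add_atTop_iff_nat 1).mp hfin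
end

section
/- For every α ∈ [0, 1/2), the spectral radius of A_α(P_n) for the path P_n on n ≥ 2 vertices satisfies 2α + 2(1−α)cos(π/n) ≤ ρ(A_α(P_n)) ≤ 2α + 2(1−α)cos(π/(n+1)). In particular ρ(A_α(P_n)) < 2 for all n. -/
open SimpleGraph Matrix Filter
open scoped Classical

/-- The Nikiforov matrix `A_α(G) = α D(G) + (1-α) A(G)`. -/
noncomputable def Aalpha {V : Type*} [Fintype V] [DecidableEq V]
    (G : SimpleGraph V) (α : ℝ) : Matrix V V ℝ :=
  α • Matrix.diagonal (fun v => (G.degree v : ℝ)) + (1 - α) • G.adjMatrix ℝ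

/-- Spectral radius of a real matrix: the sup of the absolute values of its
(real) spectrum. -/
noncomputable def specRad {V : Type*} [Fintype V] [DecidableEq V]
    (M : Matrix V V ℝ) : ℝ :=
  sSup (abs '' spectrum ℝ M)

section Aux

lemma pathAdjSum (n : ℕ) (k : Fin n) (f : ℕ → ℝ) :
    (∑ j : Fin n, if (SimpleGraph.pathGraph n).Adj k j then f j.val else 0)
      = (if (k:ℕ)+1 < n then f ((k:ℕ)+1) else 0)
        + (if 0 < (k:ℕ) then f ((k:ℕ)-1) else 0) := by
  have hsplit : ∀ j : Fin n, (if (SimpleGraph.pathGraph n).Adj k j then f j.val else 0)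
      = (if (k:ℕ)+1 = (j:ℕ) then f j.val else 0)
        + (if (j:ℕ)+1 = (k:ℕ) then f j.val else 0) := by
    intro j
    rw [SimpleGraph.pathGraph_adj]
    by_cases h1 : (k:ℕ)+1 = (j:ℕ)
    · by_cases h2 : (j:ℕ)+1 = (k:ℕ)
      · exact absurd (h1 ▸ h2) (by omega)
      · simp [h1, h2]
    · by_cases h2 : (j:ℕ)+1 = (k:ℕ) <;> simp [h1, h2]
  rw [Finset.sum_congr rfl fun j _ => hsplit j, Finset.sum_add_distrib]
  congr 1
  · by_cases h : (k:ℕ)+1 < n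
    · rw [Finset.sum_eq_single (⟨(k:ℕ)+1, h⟩ : Fin n)]
      · simp [h]
      · intro j _ hj
        have : ¬((k:ℕ)+1 = (j:ℕ)) := fun hc => hj (Fin.ext hc.symm)
        simp [this]
      · simp
    · rw [Finset.sum_eq_zero, if_neg h]
      intro j _
      have : ¬((k:ℕ)+1 = (j:ℕ)) := by have := j.isLt; omega
      simp [this]
  · by_cases h : 0 < (k:ℕ)
    · rw [Finset.sum_eq_single (⟨(k:ℕ)-1, by omega⟩ : Fin n)]
      · simp only [if_pos h]
        have : ((k:ℕ)-1) + 1 = (k:ℕ) := by omega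
        simp [this]
      · intro j _ hj
        have : ¬((j:ℕ)+1 = (k:ℕ)) := fun hc =>
          hj (Fin.ext (show (j:ℕ) = (k:ℕ)-1 by omega))
        simp [this]
      · simp
    · rw [Finset.sum_eq_zero, if_neg h]
      intro j _
      have : ¬((j:ℕ)+1 = (k:ℕ)) := by omega
      simp [this]

lemma adj_mulVec (n : ℕ) (W : ℕ → ℝ) (k : Fin n) :
    (((SimpleGraph.pathGraph n).adjMatrix ℝ) *ᵥ (fun j : Fin n => W j.val)) k
      = (if (k:ℕ)+1 < n then W ((k:ℕ)+1) else 0)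
        + (if 0 < (k:ℕ) then W ((k:ℕ)-1) else 0) := by
  rw [SimpleGraph.adjMatrix_mulVec_apply, SimpleGraph.neighborFinset_eq_filter,
    Finset.sum_filter, pathAdjSum]

lemma path_degree (n : ℕ) (k : Fin n) :
    (((SimpleGraph.pathGraph n).degree k : ℝ))
      = (if (k:ℕ)+1 < n then 1 else 0) + (if 0 < (k:ℕ) then 1 else 0) := by
  rw [← pathAdjSum n k (fun _ => (1:ℝ))]
  rw [SimpleGraph.degree, SimpleGraph.neighborFinset_eq_filter, Finset.card_filter]
  rw [Nat.cast_sum]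
  exact Finset.sum_congr rfl fun j _ => by split_ifs <;> simp

lemma cos_odd_sum (n : ℕ) (hn : 2 ≤ n) :
    ∑ m ∈ Finset.range n, Real.cos ((2*(m:ℝ)+1) * (Real.pi/n)) = 0 := by
  set θ : ℝ := Real.pi/n with hθ
  have hn0 : (0:ℝ) < n := by positivity
  have hθpos : 0 < θ := by positivity
  have hθlt : θ < Real.pi := by
    rw [hθ, div_lt_iff₀ hn0]
    have h2n : (2:ℝ) ≤ (n:ℝ) := by exact_mod_cast hn
    nlinarith [Real.pi_pos, mul_le_mul_of_nonneg_left h2n (le_of_lt Real.pi_pos)]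
  have hsin : Real.sin θ ≠ 0 := ne_of_gt (Real.sin_pos_of_pos_of_lt_pi hθpos hθlt)
  set f : ℕ → ℝ := fun m => Real.sin (2*(m:ℝ)*θ) with hf
  have hkey : (2*Real.sin θ) * ∑ m ∈ Finset.range n, Real.cos ((2*(m:ℝ)+1)*θ)
      = f n - f 0 := by
    rw [Finset.mul_sum, ← Finset.sum_range_sub f]
    refine Finset.sum_congr rfl fun m _ => ?_
    have e1 : 2*(((m:ℕ)+1 : ℕ):ℝ)*θ = (2*(m:ℝ)+1)*θ + θ := by push_cast; ring
    have e2 : 2*(m:ℝ)*θ = (2*(m:ℝ)+1)*θ - θ := by ring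
    simp only [hf, e1, e2, Real.sin_add, Real.sin_sub]
    ring
  have hfn : f n = 0 := by
    have : 2*(n:ℝ)*θ = 2*Real.pi := by
      rw [hθ]; field_simp
    simp only [hf, this, Real.sin_two_pi]
  have hf0 : f 0 = 0 := by simp [hf]
  have h2 : (2*Real.sin θ) ≠ 0 := by positivity
  have := hkey
  rw [hfn, hf0, sub_zero] at this
  exact (mul_eq_zero.mp this).resolve_left h2

lemma cos_even_sum (n : ℕ) (hn : 2 ≤ n) :
    ∑ m ∈ Finset.range (n-1), Real.cos ((2*(m:ℝ)+2) * (Real.pi/n)) = -1 := by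
  set θ : ℝ := Real.pi/n with hθ
  have hn0 : (0:ℝ) < n := by positivity
  have hθpos : 0 < θ := by positivity
  have hθlt : θ < Real.pi := by
    rw [hθ, div_lt_iff₀ hn0]
    have h2n : (2:ℝ) ≤ (n:ℝ) := by exact_mod_cast hn
    nlinarith [Real.pi_pos, mul_le_mul_of_nonneg_left h2n (le_of_lt Real.pi_pos)]
  have hsin : Real.sin θ ≠ 0 := ne_of_gt (Real.sin_pos_of_pos_of_lt_pi hθpos hθlt)
  set g : ℕ → ℝ := fun m => Real.sin ((2*(m:ℝ)+1)*θ) with hg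
  have hkey : (2*Real.sin θ) * ∑ m ∈ Finset.range (n-1), Real.cos ((2*(m:ℝ)+2)*θ)
      = g (n-1) - g 0 := by
    rw [Finset.mul_sum, ← Finset.sum_range_sub g]
    refine Finset.sum_congr rfl fun m _ => ?_
    have e1 : 2*(((m:ℕ)+1 : ℕ):ℝ)+1 = (2*(m:ℝ)+2) + 1 := by push_cast; ring
    have e2 : (((2*(m:ℝ)+2) + 1))*θ = (2*(m:ℝ)+2)*θ + θ := by ring
    have e3 : (2*(m:ℝ)+1)*θ = (2*(m:ℝ)+2)*θ - θ := by ring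
    simp only [hg, e1, e2, e3, Real.sin_add, Real.sin_sub]
    ring
  have hgn : g (n-1) = -Real.sin θ := by
    have hc : ((n-1 : ℕ):ℝ) = (n:ℝ) - 1 := by
      have : 1 ≤ n := by omega
      push_cast [this]; ring
    have : (2*((n:ℝ)-1)+1)*θ = 2*Real.pi - θ := by
      rw [hθ]; field_simp; ring
    simp only [hg, hc, this, Real.sin_sub, Real.sin_two_pi, Real.cos_two_pi]
    ring
  have hg0 : g 0 = Real.sin θ := by simp [hg]
  have h2 : (2*Real.sin θ) ≠ 0 := by positivity
  have heq : (2*Real.sin θ) * ∑ m ∈ Finset.range (n-1), Real.cos ((2*(m:ℝ)+2)*θ)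
      = (2*Real.sin θ) * (-1) := by
    rw [hkey, hgn, hg0]; ring
  exact mul_left_cancel₀ h2 heq

lemma sum_u_sq (n : ℕ) (hn : 2 ≤ n) :
    ∑ m ∈ Finset.range n, (Real.sin ((2*(m:ℝ)+1)*(Real.pi/n)/2))^2 = n/2 := by
  have h : ∀ m : ℕ, (Real.sin ((2*(m:ℝ)+1)*(Real.pi/n)/2))^2
      = 1/2 - Real.cos ((2*(m:ℝ)+1)*(Real.pi/n))/2 := by
    intro m
    rw [Real.sin_sq_eq_half_sub]
    congr 2
    ring
  rw [Finset.sum_congr rfl fun m _ => h m, Finset.sum_sub_distrib, Finset.sum_const,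
    Finset.card_range, ← Finset.sum_div, cos_odd_sum n hn]
  simp [nsmul_eq_mul]; ring

lemma sum_u_prod (n : ℕ) (hn : 2 ≤ n) :
    ∑ m ∈ Finset.range (n-1),
      (Real.sin ((2*(m:ℝ)+1)*(Real.pi/n)/2)) * (Real.sin ((2*((m+1:ℕ):ℝ)+1)*(Real.pi/n)/2))
      = (((n:ℝ)-1) * Real.cos (Real.pi/n) + 1)/2 := by
  have key : ∀ a b : ℝ, Real.sin a * Real.sin b = (Real.cos (b-a) - Real.cos (a+b))/2 := by
    intro a b; rw [Real.cos_sub, Real.cos_add]; ring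
  have h : ∀ m : ℕ, (Real.sin ((2*(m:ℝ)+1)*(Real.pi/n)/2)) * (Real.sin ((2*((m+1:ℕ):ℝ)+1)*(Real.pi/n)/2))
      = (Real.cos (Real.pi/n) - Real.cos ((2*(m:ℝ)+2)*(Real.pi/n)))/2 := by
    intro m
    have e1 : (2*((m+1:ℕ):ℝ)+1)*(Real.pi/n)/2 - (2*(m:ℝ)+1)*(Real.pi/n)/2 = Real.pi/n := by
      push_cast; ring
    have e2 : (2*(m:ℝ)+1)*(Real.pi/n)/2 + (2*((m+1:ℕ):ℝ)+1)*(Real.pi/n)/2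
        = (2*(m:ℝ)+2)*(Real.pi/n) := by
      push_cast; ring
    rw [key, e1, e2]
  rw [Finset.sum_congr rfl fun m _ => h m, ← Finset.sum_div, Finset.sum_sub_distrib,
    cos_even_sum n hn, Finset.sum_const, Finset.card_range, nsmul_eq_mul]
  have hc : ((n-1:ℕ):ℝ) = (n:ℝ)-1 := by
    have h1 : 1 ≤ n := by omega
    push_cast [h1]; ring
  rw [hc]
  ring

lemma aalpha_isHermitian {V : Type*} [Fintype V] [DecidableEq V]
    (G : SimpleGraph V) (α : ℝ) : (Aalpha G α).IsHermitian := by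
  rw [Matrix.IsHermitian, Matrix.conjTranspose_eq_transpose_of_trivial, Aalpha,
    Matrix.transpose_add, Matrix.transpose_smul, Matrix.transpose_smul,
    Matrix.diagonal_transpose, SimpleGraph.transpose_adjMatrix]

lemma exists_eigvec {m : ℕ} (M : Matrix (Fin m) (Fin m) ℝ) {lam : ℝ}
    (h : lam ∈ spectrum ℝ M) : ∃ v : Fin m → ℝ, v ≠ 0 ∧ M *ᵥ v = lam • v := by
  rw [spectrum.mem_iff, Matrix.isUnit_iff_isUnit_det, isUnit_iff_ne_zero, not_not] at h
  obtain ⟨v, hv0, hv⟩ := (Matrix.exists_mulVec_eq_zero_iff).mpr h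
  refine ⟨v, hv0, ?_⟩
  rw [Algebra.algebraMap_eq_smul_one, Matrix.sub_mulVec, Matrix.smul_mulVec,
    Matrix.one_mulVec] at hv
  have := sub_eq_zero.mp hv
  linear_combination (norm := module) -this

lemma quadform_le {m : ℕ} {M : Matrix (Fin m) (Fin m) ℝ} (hM : M.IsHermitian)
    (t : ℝ) (ht : ∀ i, hM.eigenvalues i ≤ t) (x : Fin m → ℝ) :
    x ⬝ᵥ (M *ᵥ x) ≤ t * (x ⬝ᵥ x) := by
  set U : Matrix (Fin m) (Fin m) ℝ := (hM.eigenvectorUnitary : Matrix (Fin m) (Fin m) ℝ) with hU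
  have hsU : star U = Uᵀ := by
    rw [Matrix.star_eq_conjTranspose, Matrix.conjTranspose_eq_transpose_of_trivial]
  have hUU : U * Uᵀ = 1 := by
    rw [← hsU]; exact (Matrix.mem_unitaryGroup_iff.mp hM.eigenvectorUnitary.2)
  set z : Fin m → ℝ := Uᵀ *ᵥ x with hz
  have hdot : ∀ y : Fin m → ℝ, x ⬝ᵥ (U *ᵥ y) = z ⬝ᵥ y := by
    intro y
    rw [Matrix.dotProduct_mulVec, hz]
    congr 1
    rw [← Matrix.vecMul_transpose, Matrix.transpose_transpose]
  have hzz : z ⬝ᵥ z = x ⬝ᵥ x := by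
    rw [hz, dotProduct_comm, ← hdot, Matrix.mulVec_mulVec, hUU, Matrix.one_mulVec]
  have hspec : x ⬝ᵥ (M *ᵥ x)
      = z ⬝ᵥ (Matrix.diagonal hM.eigenvalues *ᵥ z) := by
    conv_lhs => rw [hM.spectral_theorem, Unitary.conjStarAlgAut_apply]
    rw [← Matrix.mulVec_mulVec, ← Matrix.mulVec_mulVec, hdot, hsU]
    congr 2
  rw [hspec]
  have h1 : z ⬝ᵥ (Matrix.diagonal hM.eigenvalues *ᵥ z)
      = ∑ i, hM.eigenvalues i * (z i)^2 := by
    simp [dotProduct, Matrix.mulVec_diagonal]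
    exact Finset.sum_congr rfl fun i _ => by ring
  rw [h1, ← hzz]
  have h2 : z ⬝ᵥ z = ∑ i, (z i)^2 := by
    simp [dotProduct]
    exact Finset.sum_congr rfl fun i _ => by ring
  rw [h2, Finset.mul_sum]
  exact Finset.sum_le_sum fun i _ => by nlinarith [ht i, sq_nonneg (z i)]


/-- The comparison weight vector (Perron vector of the path's adjacency matrix). -/
noncomputable def wv (n : ℕ) : ℕ → ℝ := fun m => Real.sin (((m:ℝ)+1) * (Real.pi/((n:ℝ)+1)))

/-- The Rayleigh test vector. -/
noncomputable def uv (n : ℕ) : ℕ → ℝ := fun m => Real.sin ((2*(m:ℝ)+1)*(Real.pi/(n:ℝ))/2)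

lemma aalpha_mulVec (n : ℕ) (α : ℝ) (W : ℕ → ℝ) (k : Fin n) :
    (Aalpha (SimpleGraph.pathGraph n) α *ᵥ fun j : Fin n => W j.val) k
      = α * ((((SimpleGraph.pathGraph n).degree k : ℝ)) * W k.val)
        + (1-α) * ((if (k:ℕ)+1 < n then W ((k:ℕ)+1) else 0)
          + (if 0 < (k:ℕ) then W ((k:ℕ)-1) else 0)) := by
  rw [Aalpha, Matrix.add_mulVec, Matrix.smul_mulVec, Matrix.smul_mulVec]
  simp only [Pi.add_apply, Pi.smul_apply, smul_eq_mul]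
  rw [Matrix.mulVec_diagonal, adj_mulVec]

lemma aalpha_nonneg {V : Type*} [Fintype V] [DecidableEq V] (G : SimpleGraph V)
    (α : ℝ) (hα0 : 0 ≤ α) (hα1 : α ≤ 1) (i j : V) : 0 ≤ Aalpha G α i j := by
  rw [Aalpha]
  simp only [Matrix.add_apply, Pi.smul_apply, Matrix.smul_apply, smul_eq_mul,
    Matrix.diagonal_apply, SimpleGraph.adjMatrix_apply]
  have h1 : (0:ℝ) ≤ (if i = j then ((G.degree i : ℝ)) else 0) := by positivity
  have h2 : (0:ℝ) ≤ (if G.Adj i j then (1:ℝ) else 0) := by positivity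
  nlinarith

lemma path_degree_le (n : ℕ) (k : Fin n) : (((SimpleGraph.pathGraph n).degree k : ℝ)) ≤ 2 := by
  rw [path_degree]
  split_ifs <;> norm_num

lemma wv_pos (n : ℕ) (hn : 2 ≤ n) (k : Fin n) : 0 < wv n k.val := by
  have hπ := Real.pi_pos
  have hn1 : (0:ℝ) < (n:ℝ)+1 := by positivity
  apply Real.sin_pos_of_pos_of_lt_pi
  · positivity
  · have hk : ((k:ℕ):ℝ) + 1 ≤ (n:ℝ) := by
      have := k.isLt; exact_mod_cast this
    calc (((k:ℕ):ℝ)+1) * (Real.pi/((n:ℝ)+1))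
        ≤ (n:ℝ) * (Real.pi/((n:ℝ)+1)) := by
          apply mul_le_mul_of_nonneg_right hk; positivity
      _ = Real.pi * ((n:ℝ)/((n:ℝ)+1)) := by ring
      _ < Real.pi * 1 := by
          apply mul_lt_mul_of_pos_left _ hπ
          rw [div_lt_one hn1]; linarith
      _ = Real.pi := mul_one _

lemma wv_rec (n : ℕ) (hn : 2 ≤ n) (k : Fin n) :
    (if (k:ℕ)+1 < n then wv n ((k:ℕ)+1) else 0) + (if 0 < (k:ℕ) then wv n ((k:ℕ)-1) else 0)
      = 2 * Real.cos (Real.pi/((n:ℝ)+1)) * wv n k.val := by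
  have hT1 : (if (k:ℕ)+1 < n then wv n ((k:ℕ)+1) else 0)
      = Real.sin (((((k:ℕ):ℝ)+1)+1) * (Real.pi/((n:ℝ)+1))) := by
    split_ifs with h
    · rw [wv]; congr 1; push_cast; ring
    · have hkn : (k:ℕ)+1 = n := by have := k.isLt; omega
      have hkr : ((k:ℕ):ℝ) = (n:ℝ) - 1 := by
        have : (((k:ℕ):ℝ)+1) = (n:ℝ) := by exact_mod_cast congrArg (Nat.cast : ℕ → ℝ) hkn
        linarith
      have he : ((((k:ℕ):ℝ)+1)+1) * (Real.pi/((n:ℝ)+1)) = Real.pi := by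
        rw [hkr]; field_simp; ring
      rw [he, Real.sin_pi]
  have hT2 : (if 0 < (k:ℕ) then wv n ((k:ℕ)-1) else 0)
      = Real.sin (((((k:ℕ):ℝ)+1)-1) * (Real.pi/((n:ℝ)+1))) := by
    split_ifs with h
    · rw [wv]; congr 1
      have h1 : 1 ≤ (k:ℕ) := h
      have : (((k:ℕ)-1 : ℕ):ℝ) = ((k:ℕ):ℝ)-1 := by push_cast [h1]; ring
      rw [this]; ring
    · have hk0 : (k:ℕ) = 0 := by omega
      rw [hk0]; norm_num
  rw [hT1, hT2, wv]
  have e1 : ((((k:ℕ):ℝ)+1)+1) * (Real.pi/((n:ℝ)+1))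
      = (((k:ℕ):ℝ)+1) * (Real.pi/((n:ℝ)+1)) + Real.pi/((n:ℝ)+1) := by ring
  have e2 : ((((k:ℕ):ℝ)+1)-1) * (Real.pi/((n:ℝ)+1))
      = (((k:ℕ):ℝ)+1) * (Real.pi/((n:ℝ)+1)) - Real.pi/((n:ℝ)+1) := by ring
  rw [e1, e2, Real.sin_add, Real.sin_sub]
  ring

lemma Mw_le (n : ℕ) (α : ℝ) (hn : 2 ≤ n) (hα0 : 0 ≤ α) (hα2 : α < 1/2) (k : Fin n) :
    (Aalpha (SimpleGraph.pathGraph n) α *ᵥ fun j : Fin n => wv n j.val) k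
      ≤ (2*α + 2*(1-α) * Real.cos (Real.pi/((n:ℝ)+1))) * wv n k.val := by
  rw [aalpha_mulVec, wv_rec n hn k]
  have hwk := wv_pos n hn k
  have hdk := path_degree_le n k
  have hd0 : (0:ℝ) ≤ (((SimpleGraph.pathGraph n).degree k : ℝ)) := by positivity
  have key : α * ((((SimpleGraph.pathGraph n).degree k : ℝ)) * wv n k.val)
      ≤ 2 * α * wv n k.val := by
    nlinarith [mul_nonneg hα0 (mul_nonneg (by linarith : (0:ℝ) ≤ 2 - (((SimpleGraph.pathGraph n).degree k : ℝ))) hwk.le)]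
  nlinarith

lemma eig_abs_le (n : ℕ) (α : ℝ) (hn : 2 ≤ n) (hα0 : 0 ≤ α) (hα2 : α < 1/2)
    {lam : ℝ} (hlam : lam ∈ spectrum ℝ (Aalpha (SimpleGraph.pathGraph n) α)) :
    |lam| ≤ 2*α + 2*(1-α) * Real.cos (Real.pi/((n:ℝ)+1)) := by
  set M := Aalpha (SimpleGraph.pathGraph n) α with hMdef
  set c2 : ℝ := 2*α + 2*(1-α) * Real.cos (Real.pi/((n:ℝ)+1)) with hc2
  have hMt : Mᵀ = M := by
    have h := aalpha_isHermitian (SimpleGraph.pathGraph n) α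
    rwa [Matrix.IsHermitian, Matrix.conjTranspose_eq_transpose_of_trivial] at h
  have hMnn : ∀ i j, 0 ≤ M i j :=
    fun i j => aalpha_nonneg _ α hα0 (by linarith) i j
  obtain ⟨v, hv0, hveq⟩ := exists_eigvec M hlam
  set w : Fin n → ℝ := fun j => wv n j.val with hw
  have hWpos : ∀ k : Fin n, 0 < w k := fun k => wv_pos n hn k
  have hMw : ∀ k : Fin n, (M *ᵥ w) k ≤ c2 * w k := fun k => Mw_le n α hn hα0 hα2 k
  set y : Fin n → ℝ := fun j => |v j| with hy
  have hvMy : ∀ k, |lam| * y k ≤ (M *ᵥ y) k := by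
    intro k
    have h0 : (M *ᵥ v) k = lam * v k := by rw [hveq]; simp
    have h1 : |lam| * y k = |(M *ᵥ v) k| := by rw [h0, abs_mul]
    rw [h1]
    have h2 : (M *ᵥ v) k = ∑ j, M k j * v j := by
      simp [Matrix.mulVec, dotProduct]
    have h3 : (M *ᵥ y) k = ∑ j, M k j * y j := by
      simp [Matrix.mulVec, dotProduct]
    rw [h2, h3]
    calc |∑ j, M k j * v j| ≤ ∑ j, |M k j * v j| := Finset.abs_sum_le_sum_abs _ _
      _ = ∑ j, M k j * y j := by
          refine Finset.sum_congr rfl fun j _ => ?_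
          rw [abs_mul, abs_of_nonneg (hMnn k j)]
  obtain ⟨k0, hk0⟩ : ∃ k, v k ≠ 0 := by
    by_contra h
    push_neg at h
    exact hv0 (funext h)
  set S := ∑ k, w k * y k with hS
  have hynn : ∀ k : Fin n, 0 ≤ y k := fun k => abs_nonneg _
  have hSpos : 0 < S := by
    rw [hS]
    apply Finset.sum_pos' (fun k _ => mul_nonneg (hWpos k).le (hynn k))
    exact ⟨k0, Finset.mem_univ _, mul_pos (hWpos k0) (abs_pos.mpr hk0)⟩
  have hchain : |lam| * S ≤ c2 * S := by
    calc |lam| * S = ∑ k, w k * (|lam| * y k) := by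
          rw [hS, Finset.mul_sum]
          exact Finset.sum_congr rfl fun k _ => by ring
      _ ≤ ∑ k, w k * (M *ᵥ y) k :=
          Finset.sum_le_sum fun k _ =>
            mul_le_mul_of_nonneg_left (hvMy k) (hWpos k).le
      _ = w ⬝ᵥ (M *ᵥ y) := by simp [dotProduct]
      _ = (M *ᵥ w) ⬝ᵥ y := by
          rw [Matrix.dotProduct_mulVec]
          congr 1
          conv_lhs => rw [← hMt]
          rw [Matrix.vecMul_transpose]
      _ = ∑ k, (M *ᵥ w) k * y k := by simp [dotProduct]
      _ ≤ ∑ k, (c2 * w k) * y k :=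
          Finset.sum_le_sum fun k _ =>
            mul_le_mul_of_nonneg_right (hMw k) (hynn k)
      _ = c2 * S := by
          rw [hS, Finset.mul_sum]
          exact Finset.sum_congr rfl fun k _ => by ring
  exact (mul_le_mul_iff_left₀ hSpos).mp hchain


lemma uv_A1 (n : ℕ) (hn : 2 ≤ n) :
    ∑ m ∈ Finset.range n, uv n m^2 = (n:ℝ)/2 :=
  sum_u_sq n hn

lemma uv_prod (n : ℕ) (hn : 2 ≤ n) :
    ∑ m ∈ Finset.range (n-1), uv n m * uv n (m+1)
      = (((n:ℝ)-1) * Real.cos (Real.pi/(n:ℝ)) + 1)/2 :=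
  sum_u_prod n hn

lemma uv_zero_sq (n : ℕ) (hn : 2 ≤ n) :
    uv n 0 ^ 2 = 1/2 - Real.cos (Real.pi/(n:ℝ))/2 := by
  rw [uv, Real.sin_sq_eq_half_sub,
    show (2:ℝ)*((2*((0:ℕ):ℝ)+1)*(Real.pi/(n:ℝ))/2) = Real.pi/(n:ℝ) from by push_cast; ring]

lemma uv_last (n : ℕ) (hn : 2 ≤ n) : uv n (n-1) = uv n 0 := by
  rw [uv]
  have hn0 : (0:ℝ) < n := by positivity
  have hc : ((n-1:ℕ):ℝ) = (n:ℝ)-1 := by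
    have h1 : 1 ≤ n := by omega
    push_cast [h1]; ring
  have he : (2*((n:ℝ)-1)+1)*(Real.pi/(n:ℝ))/2 = Real.pi - (2*(0:ℝ)+1)*(Real.pi/(n:ℝ))/2 := by
    field_simp
    ring
  simp only [hc, he, Real.sin_pi_sub]
  congr 1
  push_cast
  ring

lemma quad_eval (n : ℕ) (α : ℝ) (hn : 2 ≤ n) :
    (fun j : Fin n => uv n j.val) ⬝ᵥ
        (Aalpha (SimpleGraph.pathGraph n) α *ᵥ fun j : Fin n => uv n j.val)
      = α*((n:ℝ) - uv n (n-1)^2 - uv n 0^2)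
        + (1-α)*(((n:ℝ)-1) * Real.cos (Real.pi/(n:ℝ)) + 1) := by
  obtain ⟨p, hp⟩ : ∃ p, n = p+1 := ⟨n-1, by omega⟩
  have hp1 : n - 1 = p := by omega
  set u : ℕ → ℝ := uv n with hu
  set F : ℕ → ℝ := fun m =>
    α*(if m+1 < n then u m^2 else 0) + α*(if 0 < m then u m^2 else 0)
    + (1-α)*(if m+1 < n then u m * u (m+1) else 0)
    + (1-α)*(if 0 < m then u m * u (m-1) else 0) with hF
  have hxMx : (fun j : Fin n => u j.val) ⬝ᵥ
      (Aalpha (SimpleGraph.pathGraph n) α *ᵥ fun j : Fin n => u j.val)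
      = ∑ m ∈ Finset.range n, F m := by
    have h0 : (fun j : Fin n => u j.val) ⬝ᵥ
        (Aalpha (SimpleGraph.pathGraph n) α *ᵥ fun j : Fin n => u j.val)
        = ∑ k : Fin n, u k.val *
            (Aalpha (SimpleGraph.pathGraph n) α *ᵥ fun j : Fin n => u j.val) k := by
      simp [dotProduct]
    rw [h0]
    rw [show (∑ k : Fin n, u k.val *
        (Aalpha (SimpleGraph.pathGraph n) α *ᵥ fun j : Fin n => u j.val) k)
        = ∑ k : Fin n, F k.val from ?_]
    · exact Fin.sum_univ_eq_sum_range F n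
    refine Finset.sum_congr rfl fun k _ => ?_
    rw [aalpha_mulVec n α u k, path_degree]
    simp only [hF]
    split_ifs <;> ring
  rw [hxMx]
  have split1 : ∀ g : ℕ → ℝ,
      ∑ m ∈ Finset.range n, (if m+1 < n then g m else 0)
        = ∑ m ∈ Finset.range (n-1), g m := by
    intro g
    rw [hp, show p+1-1 = p from rfl, Finset.sum_range_succ, if_neg (lt_irrefl _), add_zero]
    exact Finset.sum_congr rfl fun m hm =>
      if_pos (Nat.succ_lt_succ (Finset.mem_range.mp hm))
  have split2 : ∀ g : ℕ → ℝ,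
      ∑ m ∈ Finset.range n, (if 0 < m then g m else 0)
        = ∑ m ∈ Finset.range (n-1), g (m+1) := by
    intro g
    rw [hp, show p+1-1 = p from rfl, Finset.sum_range_succ', if_neg (lt_irrefl 0), add_zero]
    exact Finset.sum_congr rfl fun m hm => if_pos (Nat.succ_pos m)
  have hA1 : ∑ m ∈ Finset.range n, u m^2 = (n:ℝ)/2 := uv_A1 n hn
  have hcast : ((p+1:ℕ):ℝ) = (n:ℝ) := by rw [hp]
  have hS1 : ∑ m ∈ Finset.range (n-1), u m^2 = (n:ℝ)/2 - u (n-1)^2 := by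
    have h := hA1
    rw [hp, Finset.sum_range_succ, hcast] at h
    rw [hp1]
    linarith [h]
  have hS2 : ∑ m ∈ Finset.range (n-1), u (m+1)^2 = (n:ℝ)/2 - u 0^2 := by
    have h := hA1
    rw [hp, Finset.sum_range_succ', hcast] at h
    rw [hp1]
    linarith [h]
  have hS3 : ∑ m ∈ Finset.range (n-1), u m * u (m+1)
      = (((n:ℝ)-1) * Real.cos (Real.pi/(n:ℝ)) + 1)/2 := uv_prod n hn
  have hS4 : ∑ m ∈ Finset.range (n-1), u (m+1) * u ((m+1)-1)
      = ∑ m ∈ Finset.range (n-1), u m * u (m+1) := by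
    refine Finset.sum_congr rfl fun m _ => ?_
    rw [show m+1-1 = m from rfl]
    ring
  rw [hF]
  simp only [Finset.sum_add_distrib]
  rw [← Finset.mul_sum, ← Finset.mul_sum, ← Finset.mul_sum, ← Finset.mul_sum]
  rw [split1 (fun m => u m^2), split2 (fun m => u m^2),
    split1 (fun m => u m * u (m+1)), split2 (fun m => u m * u (m-1))]
  rw [hS4, hS1, hS2, hS3]
  ring

lemma x_norm (n : ℕ) (hn : 2 ≤ n) :
    (fun j : Fin n => uv n j.val) ⬝ᵥ (fun j : Fin n => uv n j.val) = (n:ℝ)/2 := by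
  rw [← uv_A1 n hn]
  rw [show ((fun j : Fin n => uv n j.val) ⬝ᵥ (fun j : Fin n => uv n j.val))
      = ∑ k : Fin n, uv n k.val ^2 from by
    simp [dotProduct]; exact Finset.sum_congr rfl fun k _ => by ring]
  exact Fin.sum_univ_eq_sum_range (fun m => uv n m ^2) n

end Aux

set_option maxHeartbeats 1000000 in
theorem stmt10 (α : ℝ) (hα : α ∈ Set.Ico (0:ℝ) (1/2)) (n : ℕ) (hn : 2 ≤ n) :
    2*α + 2*(1-α) * Real.cos (Real.pi / n)
        ≤ specRad (Aalpha (SimpleGraph.pathGraph n) α) ∧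
    specRad (Aalpha (SimpleGraph.pathGraph n) α)
        ≤ 2*α + 2*(1-α) * Real.cos (Real.pi / (n+1)) ∧
    specRad (Aalpha (SimpleGraph.pathGraph n) α) < 2 := by
  obtain ⟨hα0, hα2⟩ := hα
  have hα1 : (0:ℝ) < 1 - α := by linarith
  have hn0 : (0:ℝ) < n := by positivity
  have hn2 : (2:ℝ) ≤ (n:ℝ) := by exact_mod_cast hn
  have hπ := Real.pi_pos
  have hHerm : (Aalpha (SimpleGraph.pathGraph n) α).IsHermitian :=
    aalpha_isHermitian _ α
  haveI : Nonempty (Fin n) := ⟨⟨0, by omega⟩⟩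
  obtain ⟨i0, -, hi0⟩ := Finset.exists_max_image Finset.univ hHerm.eigenvalues
    ⟨⟨0, by omega⟩, Finset.mem_univ _⟩
  have hmem0 : hHerm.eigenvalues i0 ∈ spectrum ℝ (Aalpha (SimpleGraph.pathGraph n) α) :=
    hHerm.eigenvalues_mem_spectrum_real i0
  -- lower bound via the Rayleigh quotient
  have hc1Q : (2*α + 2*(1-α) * Real.cos (Real.pi / n)) * ((n:ℝ)/2)
      ≤ (fun j : Fin n => uv n j.val) ⬝ᵥ
          (Aalpha (SimpleGraph.pathGraph n) α *ᵥ fun j : Fin n => uv n j.val) := by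
    rw [quad_eval n α hn, uv_last n hn, uv_zero_sq n hn]
    have hcos1 : Real.cos (Real.pi/(n:ℝ)) ≤ 1 := Real.cos_le_one _
    nlinarith [mul_nonneg (by linarith : (0:ℝ) ≤ 1-2*α)
      (by linarith : (0:ℝ) ≤ 1 - Real.cos (Real.pi/(n:ℝ)))]
  have hQle := quadform_le hHerm (hHerm.eigenvalues i0)
    (fun i => hi0 i (Finset.mem_univ i)) (fun j : Fin n => uv n j.val)
  rw [x_norm n hn] at hQle
  have hc1lam : 2*α + 2*(1-α) * Real.cos (Real.pi / n) ≤ hHerm.eigenvalues i0 := by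
    have h1 : (2*α + 2*(1-α) * Real.cos (Real.pi / n)) * ((n:ℝ)/2)
        ≤ hHerm.eigenvalues i0 * ((n:ℝ)/2) := le_trans hc1Q hQle
    exact le_of_mul_le_mul_right h1 (by positivity)
  -- upper bound on the whole spectrum
  have hub : ∀ lam ∈ spectrum ℝ (Aalpha (SimpleGraph.pathGraph n) α),
      |lam| ≤ 2*α + 2*(1-α) * Real.cos (Real.pi/((n:ℝ)+1)) :=
    fun lam hl => eig_abs_le n α hn hα0 hα2 hl
  -- assemble
  have hne : (abs '' spectrum ℝ (Aalpha (SimpleGraph.pathGraph n) α)).Nonempty :=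
    ⟨|hHerm.eigenvalues i0|, hHerm.eigenvalues i0, hmem0, rfl⟩
  have hbddset : ∀ z ∈ abs '' spectrum ℝ (Aalpha (SimpleGraph.pathGraph n) α),
      z ≤ 2*α + 2*(1-α) * Real.cos (Real.pi/((n:ℝ)+1)) := by
    rintro z ⟨lam, hlam, rfl⟩
    exact hub lam hlam
  have hbddabove : BddAbove (abs '' spectrum ℝ (Aalpha (SimpleGraph.pathGraph n) α)) :=
    ⟨_, hbddset⟩
  have hupper : specRad (Aalpha (SimpleGraph.pathGraph n) α)
      ≤ 2*α + 2*(1-α) * Real.cos (Real.pi/((n:ℝ)+1)) := csSup_le hne hbddset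
  have hlower : 2*α + 2*(1-α) * Real.cos (Real.pi / n)
      ≤ specRad (Aalpha (SimpleGraph.pathGraph n) α) := by
    have h1 : 2*α + 2*(1-α) * Real.cos (Real.pi / n) ≤ |hHerm.eigenvalues i0| :=
      le_trans hc1lam (le_abs_self _)
    exact le_trans h1 (le_csSup hbddabove ⟨hHerm.eigenvalues i0, hmem0, rfl⟩)
  have hc2lt2 : 2*α + 2*(1-α) * Real.cos (Real.pi/((n:ℝ)+1)) < 2 := by
    have hθ'pos : (0:ℝ) < Real.pi/((n:ℝ)+1) := by positivity
    have hθ'mem : Real.pi/((n:ℝ)+1) ∈ Set.Icc 0 Real.pi := by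
      constructor
      · positivity
      · rw [div_le_iff₀ (by positivity : (0:ℝ) < (n:ℝ)+1)]
        nlinarith
    have h0mem : (0:ℝ) ∈ Set.Icc 0 Real.pi := ⟨le_refl 0, hπ.le⟩
    have hcos := Real.strictAntiOn_cos h0mem hθ'mem hθ'pos
    rw [Real.cos_zero] at hcos
    nlinarith
  exact ⟨hlower, hupper, lt_of_le_of_lt hupper hc2lt2⟩
end

section
/- The smallest limit point of the spectral radius of signed graphs (with respect to the signed adjacency matrix) is 2. More precisely: (a) 2 is a limit point of signed spectral radii (via the paths P_n with any signature); and (b) if (Γ_k) is a sequence of connected signed graphs with pairwise distinct spectral radii ρ(Γ_k) converging to some γ ≤ 2, then γ = 2. -/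
open SimpleGraph Matrix Filter
open scoped Classical

/-- The signed adjacency matrix of `(G, σ)`: entry `σ i j` if `i ~ j`, `0` otherwise. -/
noncomputable def signedAdj {V : Type*} (G : SimpleGraph V) (σ : V → V → ℝ) :
    Matrix V V ℝ :=
  Matrix.of fun i j => if G.Adj i j then σ i j else 0


section SpecLemmas
variable {n : Type*} [Fintype n] [DecidableEq n]

lemma exists_eigenvector (M : Matrix n n ℝ) {μ : ℝ} (hμ : μ ∈ spectrum ℝ M) :
    ∃ v : n → ℝ, v ≠ 0 ∧ M *ᵥ v = μ • v := by
  rw [spectrum.mem_iff] at hμ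
  have hdet : (algebraMap ℝ (Matrix n n ℝ) μ - M).det = 0 := by
    by_contra hd
    exact hμ ((Matrix.isUnit_iff_isUnit_det _).2 (isUnit_iff_ne_zero.2 hd))
  obtain ⟨v, hv0, hv⟩ := Matrix.exists_mulVec_eq_zero_iff.2 hdet
  refine ⟨v, hv0, ?_⟩
  have h2 : (algebraMap ℝ (Matrix n n ℝ) μ - M) *ᵥ v = μ • v - M *ᵥ v := by
    rw [Matrix.sub_mulVec, Algebra.algebraMap_eq_smul_one, Matrix.smul_mulVec,
      Matrix.one_mulVec]
  rw [h2] at hv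
  exact (sub_eq_zero.mp hv).symm

lemma mem_spectrum_of_eigenvector (M : Matrix n n ℝ) {μ : ℝ} {v : n → ℝ}
    (hv0 : v ≠ 0) (hv : M *ᵥ v = μ • v) : μ ∈ spectrum ℝ M := by
  rw [spectrum.mem_iff]
  have h2 : (algebraMap ℝ (Matrix n n ℝ) μ - M) *ᵥ v = 0 := by
    rw [Matrix.sub_mulVec, Algebra.algebraMap_eq_smul_one, Matrix.smul_mulVec,
      Matrix.one_mulVec, hv, sub_self]
  have hdet : (algebraMap ℝ (Matrix n n ℝ) μ - M).det = 0 :=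
    Matrix.exists_mulVec_eq_zero_iff.1 ⟨v, hv0, h2⟩
  intro hu
  exact (isUnit_iff_ne_zero.1 ((Matrix.isUnit_iff_isUnit_det _).1 hu)) hdet

lemma abs_le_of_mem_spectrum (M : Matrix n n ℝ) (c : ℝ)
    (h : ∀ i, ∑ j, |M i j| ≤ c) {μ : ℝ} (hμ : μ ∈ spectrum ℝ M) : |μ| ≤ c := by
  obtain ⟨v, hv0, hv⟩ := exists_eigenvector M hμ
  obtain ⟨i0, hi0⟩ := Function.ne_iff.1 hv0
  obtain ⟨i, -, hi⟩ := Finset.exists_max_image Finset.univ (fun j => |v j|) ⟨i0, Finset.mem_univ i0⟩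
  have hvi : 0 < |v i| := lt_of_lt_of_le (abs_pos.2 hi0) (hi i0 (Finset.mem_univ i0))
  have key : |μ| * |v i| ≤ c * |v i| := by
    have h1 : |μ * v i| = |∑ j, M i j * v j| := by
      have h2 := congrFun hv i
      simp only [Matrix.mulVec, dotProduct, Pi.smul_apply, smul_eq_mul] at h2
      rw [← h2]
    calc |μ| * |v i| = |μ * v i| := (abs_mul _ _).symm
      _ = |∑ j, M i j * v j| := h1
      _ ≤ ∑ j, |M i j * v j| := Finset.abs_sum_le_sum_abs _ _
      _ ≤ ∑ j, |M i j| * |v i| := by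
          refine Finset.sum_le_sum fun j _ => ?_
          rw [abs_mul]
          exact mul_le_mul_of_nonneg_left (hi j (Finset.mem_univ j)) (abs_nonneg _)
      _ = (∑ j, |M i j|) * |v i| := (Finset.sum_mul _ _ _).symm
      _ ≤ c * |v i| := mul_le_mul_of_nonneg_right (h i) (abs_nonneg _)
  exact le_of_mul_le_mul_right key hvi

lemma bddAbove_abs_spectrum (M : Matrix n n ℝ) : BddAbove (abs '' spectrum ℝ M) := by
  refine ⟨∑ i, ∑ j, |M i j|, ?_⟩
  rintro x ⟨μ, hμ, rfl⟩
  refine abs_le_of_mem_spectrum M _ (fun i => ?_) hμ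
  exact Finset.single_le_sum (f := fun i => ∑ j, |M i j|)
    (fun i _ => Finset.sum_nonneg fun j _ => abs_nonneg _) (Finset.mem_univ i)

lemma specRad_nonneg (M : Matrix n n ℝ) : 0 ≤ specRad M :=
  Real.sSup_nonneg (by rintro x ⟨μ, -, rfl⟩; exact abs_nonneg _)

lemma abs_le_specRad_of_mem_spectrum (M : Matrix n n ℝ) {μ : ℝ}
    (hμ : μ ∈ spectrum ℝ M) : |μ| ≤ specRad M :=
  le_csSup (bddAbove_abs_spectrum M) ⟨μ, hμ, rfl⟩

lemma specRad_le (M : Matrix n n ℝ) {c : ℝ} (hc : 0 ≤ c)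
    (h : ∀ μ ∈ spectrum ℝ M, |μ| ≤ c) : specRad M ≤ c :=
  Real.sSup_le (by rintro x ⟨μ, hμ, rfl⟩; exact h μ hμ) hc

end SpecLemmas
section Test
variable {n : Type*} [Fintype n] [DecidableEq n]

lemma eig_nonzero (M : Matrix n n ℝ) (hM : M.IsHermitian) (i : n) :
    ⇑(hM.eigenvectorBasis i) ≠ (0 : n → ℝ) := by
  intro h
  have h0 : hM.eigenvectorBasis i = 0 := by
    ext j; exact congrFun h j
  have h1 := hM.eigenvectorBasis.orthonormal.1 i
  rw [h0] at h1
  simp at h1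

lemma dot_eq_sum_eig (M : Matrix n n ℝ) (hM : M.IsHermitian) (x y : n → ℝ) :
    x ⬝ᵥ y = ∑ i, (⇑(hM.eigenvectorBasis i) ⬝ᵥ x) * (⇑(hM.eigenvectorBasis i) ⬝ᵥ y) := by
  have h := (hM.eigenvectorBasis).sum_inner_mul_inner
    ((WithLp.equiv 2 (n → ℝ)).symm x) ((WithLp.equiv 2 (n → ℝ)).symm y)
  simp only [PiLp.inner_apply, RCLike.inner_apply, starRingEnd_apply, star_trivial,
    WithLp.equiv_symm_apply, WithLp.ofLp_toLp] at h
  simp only [dotProduct, WithLp.equiv_symm_apply]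
  rw [Finset.sum_congr rfl fun i _ => mul_comm (x i) (y i), ← h]
  refine Finset.sum_congr rfl fun i _ => ?_
  congr 1
  exact Finset.sum_congr rfl fun j _ => mul_comm _ _

lemma transpose_eq_of_herm (M : Matrix n n ℝ) (hM : M.IsHermitian) : Mᵀ = M := by
  ext i j
  rw [Matrix.transpose_apply]
  simpa using congrFun (congrFun hM.eq i) j

section Rayleigh
variable {n : Type*} [Fintype n] [DecidableEq n]

lemma eigenvalues_mem_spectrum (M : Matrix n n ℝ) (hM : M.IsHermitian) (i : n) :
    hM.eigenvalues i ∈ spectrum ℝ M :=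
  mem_spectrum_of_eigenvector M (eig_nonzero M hM i) (hM.mulVec_eigenvectorBasis i)

lemma abs_eigenvalues_le (M : Matrix n n ℝ) (hM : M.IsHermitian) (i : n) :
    |hM.eigenvalues i| ≤ specRad M :=
  abs_le_specRad_of_mem_spectrum M (eigenvalues_mem_spectrum M hM i)

lemma eig_dot_mulVec (M : Matrix n n ℝ) (hM : M.IsHermitian) (i : n) (x : n → ℝ) :
    ⇑(hM.eigenvectorBasis i) ⬝ᵥ (M *ᵥ x) = hM.eigenvalues i * (⇑(hM.eigenvectorBasis i) ⬝ᵥ x) := by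
  rw [Matrix.dotProduct_mulVec, ← Matrix.mulVec_transpose, transpose_eq_of_herm M hM,
    hM.mulVec_eigenvectorBasis, smul_dotProduct]
  rfl

lemma rayleigh_abs_le (M : Matrix n n ℝ) (hM : M.IsHermitian) (x : n → ℝ) :
    |x ⬝ᵥ M *ᵥ x| ≤ specRad M * (x ⬝ᵥ x) := by
  have hd := dot_eq_sum_eig M hM x (M *ᵥ x)
  have hx := dot_eq_sum_eig M hM x x
  calc |x ⬝ᵥ M *ᵥ x| = |∑ i, hM.eigenvalues i * (⇑(hM.eigenvectorBasis i) ⬝ᵥ x)^2| := by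
        rw [hd]; congr 1; refine Finset.sum_congr rfl fun i _ => ?_
        rw [eig_dot_mulVec M hM i x]; ring
    _ ≤ ∑ i, |hM.eigenvalues i * (⇑(hM.eigenvectorBasis i) ⬝ᵥ x)^2| :=
        Finset.abs_sum_le_sum_abs _ _
    _ ≤ ∑ i, specRad M * (⇑(hM.eigenvectorBasis i) ⬝ᵥ x)^2 := by
        refine Finset.sum_le_sum fun i _ => ?_
        rw [abs_mul, abs_pow, sq_abs]
        exact mul_le_mul_of_nonneg_right (abs_eigenvalues_le M hM i) (sq_nonneg _)
    _ = specRad M * (x ⬝ᵥ x) := by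
        rw [hx, Finset.mul_sum]
        exact Finset.sum_congr rfl fun i _ => by ring

lemma mulVec_dot_le (M : Matrix n n ℝ) (hM : M.IsHermitian) (x : n → ℝ) :
    (M *ᵥ x) ⬝ᵥ (M *ᵥ x) ≤ specRad M ^ 2 * (x ⬝ᵥ x) := by
  have hd := dot_eq_sum_eig M hM (M *ᵥ x) (M *ᵥ x)
  have hx := dot_eq_sum_eig M hM x x
  calc (M *ᵥ x) ⬝ᵥ (M *ᵥ x)
      = ∑ i, (hM.eigenvalues i)^2 * (⇑(hM.eigenvectorBasis i) ⬝ᵥ x)^2 := by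
        rw [hd]; refine Finset.sum_congr rfl fun i _ => ?_
        rw [eig_dot_mulVec M hM i x]; ring
    _ ≤ ∑ i, specRad M ^ 2 * (⇑(hM.eigenvectorBasis i) ⬝ᵥ x)^2 := by
        refine Finset.sum_le_sum fun i _ => ?_
        refine mul_le_mul_of_nonneg_right ?_ (sq_nonneg _)
        have h := abs_eigenvalues_le M hM i
        calc (hM.eigenvalues i)^2 = |hM.eigenvalues i|^2 := (sq_abs _).symm
          _ ≤ specRad M ^ 2 := by
              refine pow_le_pow_left₀ (abs_nonneg _) h 2
    _ = specRad M ^ 2 * (x ⬝ᵥ x) := by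
        rw [hx, Finset.mul_sum]
        exact Finset.sum_congr rfl fun i _ => by ring

end Rayleigh

section Test
variable {V : Type*} [Fintype V] [DecidableEq V]

lemma dot_single_sum (y : V → ℝ) (s : Finset ℕ) (c : ℕ → ℝ) (w : ℕ → V) :
    (∑ i ∈ s, c i • (Pi.single (w i) 1 : V → ℝ)) ⬝ᵥ y = ∑ i ∈ s, c i * y (w i) := by
  simp only [dotProduct, Finset.sum_apply, Pi.smul_apply, Pi.single_apply,
    smul_eq_mul, Finset.sum_mul]
  rw [Finset.sum_comm]
  refine Finset.sum_congr rfl fun i _ => ?_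
  simp [mul_ite, ite_mul, Finset.sum_ite_eq]

/-- switching sign sequence along a path -/
noncomputable def dSign (s : ℕ → ℝ) : ℕ → ℝ
  | 0 => 1
  | (i+1) => dSign s i * s i

lemma path_vec_sq (L : ℕ) (w : ℕ → V) (c : ℕ → ℝ)
    (hinj : ∀ i ≤ L, ∀ j ≤ L, w i = w j → i = j) :
    (∑ i ∈ Finset.range (L+1), c i • (Pi.single (w i) 1 : V → ℝ)) ⬝ᵥ
    (∑ i ∈ Finset.range (L+1), c i • (Pi.single (w i) 1 : V → ℝ)) =
    ∑ i ∈ Finset.range (L+1), c i ^ 2 := by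
  rw [dot_single_sum]
  refine Finset.sum_congr rfl fun i hi => ?_
  rw [Finset.mem_range, Nat.lt_succ_iff] at hi
  have hx : (∑ j ∈ Finset.range (L+1), c j • (Pi.single (w j) 1 : V → ℝ)) (w i)
      = c i := by
    rw [Finset.sum_apply]
    rw [Finset.sum_eq_single i]
    · simp
    · intro j hj hne
      rw [Finset.mem_range, Nat.lt_succ_iff] at hj
      have : w j ≠ w i := fun h => hne (hinj j hj i hi h)
      simp [Pi.single_apply, this]
    · intro h; exact absurd (Finset.mem_range.2 (Nat.lt_succ_of_le hi)) h
  rw [hx]; ring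

lemma path_quad (M : Matrix V V ℝ) (L : ℕ) (w : ℕ → V) (c : ℕ → ℝ) :
    (∑ i ∈ Finset.range (L+1), c i • (Pi.single (w i) 1 : V → ℝ)) ⬝ᵥ
    (M *ᵥ ∑ i ∈ Finset.range (L+1), c i • (Pi.single (w i) 1 : V → ℝ)) =
    ∑ i ∈ Finset.range (L+1), ∑ j ∈ Finset.range (L+1),
      c i * c j * M (w i) (w j) := by
  rw [dot_single_sum]
  refine Finset.sum_congr rfl fun i _ => ?_
  have : (M *ᵥ ∑ j ∈ Finset.range (L+1), c j • (Pi.single (w j) 1 : V → ℝ)) (w i)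
      = ∑ j ∈ Finset.range (L+1), c j * M (w i) (w j) := by
    have h1 : (M *ᵥ ∑ j ∈ Finset.range (L+1), c j • (Pi.single (w j) 1 : V → ℝ)) (w i)
        = (∑ j ∈ Finset.range (L+1), c j • (Pi.single (w j) 1 : V → ℝ)) ⬝ᵥ M (w i) := by
      rw [Matrix.mulVec, dotProduct_comm]
    rw [h1, dot_single_sum]
  rw [this, Finset.mul_sum]
  exact Finset.sum_congr rfl fun j _ => by ring

lemma sum_indicator_succ (L : ℕ) :
    ∑ i ∈ Finset.range (L+1), ∑ j ∈ Finset.range (L+1),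
      (if i + 1 = j then (1:ℝ) else 0) = L := by
  have h1 : ∀ i ∈ Finset.range (L+1),
      (∑ j ∈ Finset.range (L+1), (if i + 1 = j then (1:ℝ) else 0))
        = if i < L then 1 else 0 := by
    intro i _
    rw [Finset.sum_ite_eq]
    exact if_congr (by simp only [Finset.mem_range]; omega) rfl rfl
  rw [Finset.sum_congr rfl h1]
  have h2 : ∀ i ∈ Finset.range (L+1), (if i < L then (1:ℝ) else 0)
      = if i ∈ Finset.range L then 1 else 0 := by
    intro i _; simp [Finset.mem_range]
  rw [Finset.sum_congr rfl h2, Finset.sum_ite_mem]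
  have h3 : Finset.range (L+1) ∩ Finset.range L = Finset.range L :=
    Finset.inter_eq_right.2 (Finset.range_subset_range.2 (by omega))
  rw [h3]
  simp

lemma path_rayleigh (M : Matrix V V ℝ) (hM : M.IsHermitian) (L : ℕ) (w : ℕ → V)
    (hinj : ∀ i ≤ L, ∀ j ≤ L, w i = w j → i = j)
    (hcons : ∀ i < L, M (w i) (w (i+1)) = 1 ∨ M (w i) (w (i+1)) = -1)
    (hzero : ∀ i ≤ L, ∀ j ≤ L, i + 1 ≠ j → j + 1 ≠ i → M (w i) (w j) = 0) :
    2 * L ≤ specRad M * (L + 1) := by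
  set s : ℕ → ℝ := fun i => M (w i) (w (i+1)) with hs
  set c : ℕ → ℝ := dSign s with hc
  have hsymm : ∀ a b, M a b = M b a := fun a b =>
    (congrFun (congrFun (transpose_eq_of_herm M hM) a) b).symm
  have hs2 : ∀ i < L, s i ^ 2 = 1 := by
    intro i hi
    rcases hcons i hi with h | h <;> rw [show s i = M (w i) (w (i+1)) from rfl, h] <;> norm_num
  have hc2 : ∀ i ≤ L, c i ^ 2 = 1 := by
    intro i
    induction i with
    | zero => intro _; rw [show c 0 = 1 from rfl]; norm_num
    | succ i ih =>
        intro h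
        rw [show c (i+1) = c i * s i from rfl, mul_pow, ih (by omega), hs2 i (by omega)]
        norm_num
  have key : ∀ i ≤ L, ∀ j ≤ L, c i * c j * M (w i) (w j)
      = (if i+1 = j then (1:ℝ) else 0) + (if j+1 = i then 1 else 0) := by
    intro i hi j hj
    by_cases h1 : i + 1 = j
    · subst h1
      rw [if_pos rfl, if_neg (by omega)]
      have hstep : c i * c (i+1) * M (w i) (w (i+1)) = c i ^ 2 * s i ^ 2 := by
        rw [show c (i+1) = c i * s i from rfl, show M (w i) (w (i+1)) = s i from rfl]
        ring
      rw [hstep, hc2 i (by omega), hs2 i (by omega)]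
      norm_num
    · by_cases h2 : j + 1 = i
      · subst h2
        rw [if_neg h1, if_pos rfl]
        have hM' : M (w (j+1)) (w j) = s j := by
          rw [hsymm]
        have hstep : c (j+1) * c j * M (w (j+1)) (w j) = c j ^ 2 * s j ^ 2 := by
          rw [show c (j+1) = c j * s j from rfl, hM']
          ring
        rw [hstep, hc2 j (by omega), hs2 j (by omega)]
        norm_num
      · rw [hzero i hi j hj h1 h2, if_neg h1, if_neg h2]
        ring
  set x := ∑ i ∈ Finset.range (L+1), c i • (Pi.single (w i) 1 : V → ℝ) with hx
  have hxx : x ⬝ᵥ x = L + 1 := by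
    rw [hx, path_vec_sq L w c hinj]
    rw [Finset.sum_congr rfl (fun i hi => hc2 i (by
      rw [Finset.mem_range, Nat.lt_succ_iff] at hi; exact hi))]
    simp
  have hQval : x ⬝ᵥ (M *ᵥ x) = 2 * L := by
    rw [hx, path_quad M L w c]
    have hterm : ∀ i ∈ Finset.range (L+1), ∀ j ∈ Finset.range (L+1),
        c i * c j * M (w i) (w j)
          = (if i+1 = j then (1:ℝ) else 0) + (if j+1 = i then 1 else 0) := by
      intro i hi j hj
      rw [Finset.mem_range, Nat.lt_succ_iff] at hi hj
      exact key i hi j hj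
    rw [Finset.sum_congr rfl (fun i hi => Finset.sum_congr rfl (fun j hj => hterm i hi j hj))]
    rw [Finset.sum_congr rfl (fun i _ => Finset.sum_add_distrib), Finset.sum_add_distrib,
      sum_indicator_succ L]
    have hswap : ∑ i ∈ Finset.range (L+1), ∑ j ∈ Finset.range (L+1),
        (if j + 1 = i then (1:ℝ) else 0) = L := by
      rw [Finset.sum_comm]
      exact sum_indicator_succ L
    rw [hswap]; ring
  have hR := rayleigh_abs_le M hM x
  rw [hQval, hxx] at hR
  calc (2:ℝ) * L = |2 * (L:ℝ)| := (abs_of_nonneg (by positivity)).symm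
    _ ≤ specRad M * (L + 1) := hR

lemma signedAdj_isHermitian {V : Type*} (G : SimpleGraph V) (σ : V → V → ℝ)
    (hσ : ∀ i j, G.Adj i j → σ i j = σ j i) : (signedAdj G σ).IsHermitian := by
  rw [Matrix.IsHermitian]
  ext i j
  simp only [Matrix.conjTranspose_apply, signedAdj, Matrix.of_apply, star_trivial]
  by_cases h : G.Adj i j
  · rw [if_pos h, if_pos h.symm, hσ i j h]
  · rw [if_neg h, if_neg (fun h' => h h'.symm)]

lemma sum_fin_indicator (n : ℕ) (a : ℕ) :
    ∑ j : Fin n, (if a = (j:ℕ) then (1:ℝ) else 0) ≤ 1 := by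
  by_cases hn : a < n
  · have h : ∀ j : Fin n, (a = (j:ℕ)) ↔ ((⟨a, hn⟩ : Fin n) = j) := by
      intro j; rw [Fin.ext_iff]
    rw [Fintype.sum_congr _ _ (fun j => if_congr (h j) rfl rfl)]
    rw [Finset.sum_ite_eq]
    simp
  · have h : ∀ j : Fin n, ¬ (a = (j:ℕ)) := fun j hj => hn (hj ▸ j.isLt)
    rw [Fintype.sum_congr _ _ (fun j => if_neg (h j))]
    norm_num

lemma path_row_bound (n : ℕ) (σ : Fin n → Fin n → ℝ)
    (hσ : ∀ i j, (pathGraph n).Adj i j → (σ i j = 1 ∨ σ i j = -1)) (i : Fin n) :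
    ∑ j, |signedAdj (pathGraph n) σ i j| ≤ 2 := by
  have hle : ∀ j : Fin n, |signedAdj (pathGraph n) σ i j| ≤
      (if (i:ℕ) + 1 = (j:ℕ) then (1:ℝ) else 0) + (if (j:ℕ) + 1 = (i:ℕ) then 1 else 0) := by
    intro j
    by_cases h : (pathGraph n).Adj i j
    · have h2 : |signedAdj (pathGraph n) σ i j| = 1 := by
        simp only [signedAdj, Matrix.of_apply, if_pos h]
        rcases hσ i j h with h1 | h1 <;> rw [h1] <;> norm_num
      rw [h2]
      rcases pathGraph_adj.1 h with hc | hc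
      · rw [if_pos hc]
        have : (0:ℝ) ≤ if (j:ℕ) + 1 = (i:ℕ) then 1 else 0 := by positivity
        linarith
      · rw [if_pos hc]
        have : (0:ℝ) ≤ if (i:ℕ) + 1 = (j:ℕ) then 1 else 0 := by positivity
        linarith
    · have h2 : signedAdj (pathGraph n) σ i j = 0 := by
        simp only [signedAdj, Matrix.of_apply, if_neg h]
      rw [h2, abs_zero]
      positivity
  calc ∑ j, |signedAdj (pathGraph n) σ i j|
      ≤ ∑ j : Fin n, ((if (i:ℕ) + 1 = (j:ℕ) then (1:ℝ) else 0)
          + (if (j:ℕ) + 1 = (i:ℕ) then 1 else 0)) :=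
        Finset.sum_le_sum fun j _ => hle j
    _ = (∑ j : Fin n, (if (i:ℕ) + 1 = (j:ℕ) then (1:ℝ) else 0))
          + ∑ j : Fin n, (if (j:ℕ) + 1 = (i:ℕ) then (1:ℝ) else 0) :=
        Finset.sum_add_distrib
    _ ≤ 1 + 1 := by
        refine add_le_add (sum_fin_indicator n ((i:ℕ)+1)) ?_
        have h3 : ∀ j : Fin n, ((if (j:ℕ) + 1 = (i:ℕ) then (1:ℝ) else 0))
            = if (i:ℕ) - 1 = (j:ℕ) ∧ 1 ≤ (i:ℕ) then 1 else 0 := by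
          intro j
          exact if_congr (by omega) rfl rfl
        rw [Fintype.sum_congr _ _ h3]
        by_cases hi : 1 ≤ (i:ℕ)
        · have h4 : ∀ j : Fin n, (((i:ℕ) - 1 = (j:ℕ) ∧ 1 ≤ (i:ℕ)) ↔ ((i:ℕ) - 1 = (j:ℕ))) :=
            fun j => and_iff_left hi
          rw [Fintype.sum_congr _ _ (fun j => if_congr (h4 j) rfl rfl)]
          exact sum_fin_indicator n ((i:ℕ)-1)
        · rw [Fintype.sum_congr _ _ (fun j => if_neg (fun hc => hi hc.2))]
          norm_num
    _ = 2 := by norm_num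

lemma specRad_path_le (n : ℕ) (σ : Fin n → Fin n → ℝ)
    (hσ : ∀ i j, (pathGraph n).Adj i j → (σ i j = 1 ∨ σ i j = -1)) :
    specRad (signedAdj (pathGraph n) σ) ≤ 2 :=
  specRad_le _ (by norm_num)
    (fun μ hμ => abs_le_of_mem_spectrum _ 2 (path_row_bound n σ hσ) hμ)

lemma specRad_path_lb (L : ℕ) (σ : Fin (L+1) → Fin (L+1) → ℝ)
    (hσ : ∀ i j, (pathGraph (L+1)).Adj i j → (σ i j = 1 ∨ σ i j = -1) ∧ σ i j = σ j i) :
    2 * L ≤ specRad (signedAdj (pathGraph (L+1)) σ) * (L + 1) := by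
  set M := signedAdj (pathGraph (L+1)) σ with hMdef
  have hM : M.IsHermitian := signedAdj_isHermitian _ _ (fun i j h => (hσ i j h).2)
  set w : ℕ → Fin (L+1) := fun i => ⟨min i L, by omega⟩ with hw
  have hwv : ∀ i ≤ L, ((w i) : ℕ) = i := by
    intro i hi; simp [hw, min_eq_left hi]
  refine path_rayleigh M hM L w ?_ ?_ ?_
  · intro i hi j hj h
    have := congrArg (Fin.val) h
    rw [hwv i hi, hwv j hj] at this
    exact this
  · intro i hi
    have hadj : (pathGraph (L+1)).Adj (w i) (w (i+1)) := by
      rw [pathGraph_adj]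
      left
      rw [hwv i (by omega), hwv (i+1) (by omega)]
    have : M (w i) (w (i+1)) = σ (w i) (w (i+1)) := by
      simp only [hMdef, signedAdj, Matrix.of_apply, if_pos hadj]
    rw [this]
    exact (hσ _ _ hadj).1
  · intro i hi j hj h1 h2
    have hnadj : ¬ (pathGraph (L+1)).Adj (w i) (w j) := by
      rw [pathGraph_adj, hwv i hi, hwv j hj]
      omega
    simp only [hMdef, signedAdj, Matrix.of_apply, if_neg hnadj]

lemma tendsto_lower : Tendsto (fun n : ℕ => 2 - 2/(n:ℝ)) atTop (nhds 2) := by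
  have h : Tendsto (fun _ : ℕ => (2:ℝ)) atTop (nhds 2) := tendsto_const_nhds
  have h2 := tendsto_const_div_atTop_nhds_zero_nat (2:ℝ)
  simpa using h.sub h2

theorem partA (σ : (n : ℕ) → Fin n → Fin n → ℝ)
    (hσ : ∀ n i j, (SimpleGraph.pathGraph n).Adj i j →
        (σ n i j = 1 ∨ σ n i j = -1) ∧ σ n i j = σ n j i) :
    Filter.Tendsto
      (fun n : ℕ => specRad (signedAdj (SimpleGraph.pathGraph n) (σ n)))
      Filter.atTop (nhds 2) := by
  refine tendsto_of_tendsto_of_tendsto_of_le_of_le' tendsto_lower tendsto_const_nhds ?_ ?_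
  · filter_upwards [eventually_ge_atTop 1] with n hn
    obtain ⟨L, rfl⟩ : ∃ L, n = L + 1 := ⟨n - 1, by omega⟩
    have hlb := specRad_path_lb L (σ (L+1)) (hσ (L+1))
    have hL1 : (0:ℝ) < (L:ℝ) + 1 := by positivity
    have hcast : ((L+1 : ℕ) : ℝ) = (L:ℝ) + 1 := by push_cast; ring
    rw [hcast]
    rw [show (2:ℝ) - 2/((L:ℝ)+1) = (2*L)/((L:ℝ)+1) by field_simp; ring]
    rw [div_le_iff₀ hL1]
    exact hlb
  · filter_upwards with n
    exact specRad_path_le n (σ n) (fun i j h => (hσ n i j h).1)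

section Graph
variable {V : Type*} {G : SimpleGraph V}

lemma dist_start_getVert_le (hG : G.Connected) {u v : V} (p : G.Walk u v) (i : ℕ) :
    G.dist u (p.getVert i) ≤ i := by
  induction p generalizing i with
  | @nil a =>
      rw [show (SimpleGraph.Walk.nil : G.Walk a a).getVert i = a from rfl]
      simp [SimpleGraph.dist_self]
  | @cons a b c h q ih =>
      cases i with
      | zero => simp
      | succ i =>
          rw [SimpleGraph.Walk.getVert_cons_succ]
          calc G.dist a (q.getVert i) ≤ G.dist a b + G.dist b (q.getVert i) :=
                hG.dist_triangle
            _ ≤ 1 + i := by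
                have h1 : G.dist a b ≤ 1 := by
                  have := SimpleGraph.dist_le (SimpleGraph.Walk.cons h SimpleGraph.Walk.nil)
                  simpa using this
                exact add_le_add h1 (ih i)
            _ = i + 1 := by omega

lemma dist_getVert_end_le {u v : V} (p : G.Walk u v) (i : ℕ) :
    G.dist (p.getVert i) v ≤ p.length - i := by
  induction p generalizing i with
  | @nil a =>
      rw [show (SimpleGraph.Walk.nil : G.Walk a a).getVert i = a from rfl]
      simp [SimpleGraph.dist_self]
  | @cons a b c h q ih =>
      cases i with
      | zero =>
          rw [SimpleGraph.Walk.getVert_zero]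
          simpa using SimpleGraph.dist_le (SimpleGraph.Walk.cons h q)
      | succ i =>
          rw [SimpleGraph.Walk.getVert_cons_succ]
          calc G.dist (q.getVert i) c ≤ q.length - i := ih i
            _ ≤ (SimpleGraph.Walk.cons h q).length - (i+1) := by
                rw [SimpleGraph.Walk.length_cons]; omega

end Graph

section Ball
variable {V : Type*} [Fintype V] [DecidableEq V] {G : SimpleGraph V}

lemma walk_cons_decomp {a b : V} (p : G.Walk a b) (k : ℕ) (h : p.length = k + 1) :
    ∃ w, G.Adj a w ∧ ∃ q : G.Walk w b, q.length = k := by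
  cases p with
  | nil => simp at h
  | cons hadj q =>
      refine ⟨_, hadj, q, ?_⟩
      simpa using h

lemma ball_card_le [DecidableRel G.Adj] (hG : G.Connected) {D : ℕ}
    (hdeg : ∀ v, G.degree v ≤ D) (u : V) (r : ℕ) :
    (Finset.univ.filter (fun v => G.dist u v ≤ r)).card ≤ (D+1)^r := by
  induction r with
  | zero =>
      have hsub : Finset.univ.filter (fun v => G.dist u v ≤ 0) ⊆ {u} := by
        intro v hv
        simp only [Finset.mem_filter, Nat.le_zero] at hv
        rw [hG.dist_eq_zero_iff] at hv
        simp [hv.2.symm]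
      calc _ ≤ ({u} : Finset V).card := Finset.card_le_card hsub
        _ = 1 := Finset.card_singleton u
        _ = (D+1)^0 := by norm_num
  | succ r ih =>
      have hsub : Finset.univ.filter (fun v => G.dist u v ≤ r + 1) ⊆
          (Finset.univ.filter (fun v => G.dist u v ≤ r)).biUnion
            (fun w => insert w (G.neighborFinset w)) := by
        intro v hv
        simp only [Finset.mem_filter, Finset.mem_univ, true_and] at hv
        rw [Finset.mem_biUnion]
        by_cases hle : G.dist u v ≤ r
        · exact ⟨v, by simp [hle], Finset.mem_insert_self v _⟩
        · have heq : G.dist u v = r + 1 := by omega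
          obtain ⟨p, hp⟩ := hG.exists_walk_length_eq_dist u v
          have hlen : p.reverse.length = r + 1 := by
            rw [SimpleGraph.Walk.length_reverse, hp, heq]
          obtain ⟨w, hadj, q, hq⟩ := walk_cons_decomp p.reverse (r) hlen
          refine ⟨w, ?_, ?_⟩
          · simp only [Finset.mem_filter, Finset.mem_univ, true_and]
            calc G.dist u w = G.dist w u := SimpleGraph.dist_comm ..
              _ ≤ q.length := SimpleGraph.dist_le q
              _ = r := hq
          · exact Finset.mem_insert_of_mem ((G.mem_neighborFinset w v).2 hadj.symm)
      calc (Finset.univ.filter (fun v => G.dist u v ≤ r + 1)).card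
          ≤ ((Finset.univ.filter (fun v => G.dist u v ≤ r)).biUnion
              (fun w => insert w (G.neighborFinset w))).card := Finset.card_le_card hsub
        _ ≤ ∑ w ∈ Finset.univ.filter (fun v => G.dist u v ≤ r),
              (insert w (G.neighborFinset w)).card := Finset.card_biUnion_le
        _ ≤ ∑ _w ∈ Finset.univ.filter (fun v => G.dist u v ≤ r), (D + 1) := by
            refine Finset.sum_le_sum fun w _ => ?_
            calc (insert w (G.neighborFinset w)).card ≤ (G.neighborFinset w).card + 1 :=
                  Finset.card_insert_le _ _
              _ ≤ D + 1 := by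
                  have := hdeg w
                  rw [← SimpleGraph.card_neighborFinset_eq_degree] at this
                  omega
        _ = (Finset.univ.filter (fun v => G.dist u v ≤ r)).card * (D + 1) := by
            rw [Finset.sum_const, smul_eq_mul]
        _ ≤ (D+1)^r * (D+1) := Nat.mul_le_mul_right _ ih
        _ = (D+1)^(r+1) := by ring

lemma exists_path_data [DecidableRel G.Adj] (hG : G.Connected) {D L : ℕ}
    (hdeg : ∀ v, G.degree v ≤ D) (hcard : (D+1)^L < Fintype.card V) :
    ∃ w : ℕ → V,
      (∀ i ≤ L, ∀ j ≤ L, w i = w j → i = j) ∧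
      (∀ i < L, G.Adj (w i) (w (i+1))) ∧
      (∀ i ≤ L, ∀ j ≤ L, i+1 ≠ j → j+1 ≠ i → i ≠ j → ¬ G.Adj (w i) (w j)) := by
  have hne : Nonempty V := by
    rw [← Fintype.card_pos_iff]
    omega
  obtain ⟨u⟩ := hne
  have hfar : ∃ v : V, ¬ (G.dist u v ≤ L) := by
    by_contra hc
    push_neg at hc
    have : (Finset.univ : Finset V) ⊆ Finset.univ.filter (fun v => G.dist u v ≤ L) := by
      intro v _
      simp [hc v]
    have hcard2 : Fintype.card V ≤ (D+1)^L := by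
      calc Fintype.card V = (Finset.univ : Finset V).card := rfl
        _ ≤ (Finset.univ.filter (fun v => G.dist u v ≤ L)).card := Finset.card_le_card this
        _ ≤ (D+1)^L := ball_card_le hG hdeg u L
    omega
  obtain ⟨v, hv⟩ := hfar
  have hLd : L < G.dist u v := by omega
  obtain ⟨p, hp⟩ := hG.exists_walk_length_eq_dist u v
  have hLlen : L < p.length := by omega
  set w : ℕ → V := fun i => p.getVert i with hw
  have hdistij : ∀ i j, i ≤ j → j ≤ L → j - i ≤ G.dist (w i) (w j) := by
    intro i j hij hjL
    have h1 : G.dist u (w i) ≤ i := dist_start_getVert_le hG p i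
    have h2 : G.dist (w j) v ≤ p.length - j := dist_getVert_end_le p j
    have h3 : G.dist u v ≤ G.dist u (w i) + (G.dist (w i) (w j) + G.dist (w j) v) :=
      le_trans hG.dist_triangle (by
        exact add_le_add_right hG.dist_triangle _)
    have h4 : p.length ≤ G.dist u (w i) + (G.dist (w i) (w j) + G.dist (w j) v) := by
      rw [hp]; exact h3
    omega
  refine ⟨w, ?_, ?_, ?_⟩
  · intro i hi j hj hww
    rcases le_total i j with h | h
    · have := hdistij i j h hj
      rw [hww, SimpleGraph.dist_self] at this
      omega
    · have := hdistij j i h hi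
      rw [hww, SimpleGraph.dist_self] at this
      omega
  · intro i hi
    exact p.adj_getVert_succ (by omega)
  · intro i hi j hj h1 h2 hne hadj
    rcases lt_or_gt_of_ne hne with h | h
    · have hd := hdistij i j (by omega) hj
      have : G.dist (w i) (w j) = 1 := SimpleGraph.dist_eq_one_iff_adj.2 hadj
      omega
    · have hd := hdistij j i (by omega) hi
      have : G.dist (w j) (w i) = 1 := SimpleGraph.dist_eq_one_iff_adj.2 hadj.symm
      omega

end Ball

lemma degree_le_specRad_sq {V : Type*} [Fintype V] [DecidableEq V]
    (G : SimpleGraph V) [DecidableRel G.Adj] (σ : V → V → ℝ)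
    (hσ : ∀ i j, G.Adj i j → (σ i j = 1 ∨ σ i j = -1) ∧ σ i j = σ j i) (v : V) :
    (G.degree v : ℝ) ≤ specRad (signedAdj G σ) ^ 2 := by
  set M := signedAdj G σ with hMdef
  have hM : M.IsHermitian := signedAdj_isHermitian _ _ (fun i j h => (hσ i j h).2)
  have h := mulVec_dot_le M hM (Pi.single v 1)
  have hx : (Pi.single v 1 : V → ℝ) ⬝ᵥ (Pi.single v 1 : V → ℝ) = 1 := by
    rw [single_dotProduct]
    simp
  have hMv : M *ᵥ (Pi.single v 1 : V → ℝ) = fun i => M i v := by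
    rw [Matrix.mulVec_single]
    simp
    rfl
  have hdot : (M *ᵥ (Pi.single v 1 : V → ℝ)) ⬝ᵥ (M *ᵥ (Pi.single v 1 : V → ℝ))
      = (G.degree v : ℝ) := by
    rw [hMv]
    have hterm : ∀ i : V, M i v * M i v = if G.Adj v i then (1:ℝ) else 0 := by
      intro i
      by_cases hadj : G.Adj i v
      · have h1 : M i v = σ i v := by
          simp only [hMdef, signedAdj, Matrix.of_apply, if_pos hadj]
        rw [h1, if_pos hadj.symm]
        rcases (hσ i v hadj).1 with h2 | h2 <;> rw [h2] <;> norm_num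
      · have h1 : M i v = 0 := by
          simp only [hMdef, signedAdj, Matrix.of_apply, if_neg hadj]
        rw [h1, if_neg (fun h' => hadj h'.symm)]
        ring
    calc (fun i => M i v) ⬝ᵥ (fun i => M i v) = ∑ i, M i v * M i v := rfl
      _ = ∑ i : V, (if G.Adj v i then (1:ℝ) else 0) :=
          Finset.sum_congr rfl fun i _ => hterm i
      _ = ((Finset.univ.filter (fun i => G.Adj v i)).card : ℝ) := by
          rw [Finset.sum_boole]
      _ = (G.degree v : ℝ) := by
          rw [SimpleGraph.degree, SimpleGraph.neighborFinset_eq_filter]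
  rw [hdot, hx, mul_one] at h
  exact h

lemma finite_small_card (m : ℕ → ℕ) (G : ∀ k, SimpleGraph (Fin (m k)))
    (σ : ∀ k, Fin (m k) → Fin (m k) → ℝ)
    (hσ : ∀ k i j, (G k).Adj i j → (σ k i j = 1 ∨ σ k i j = -1) ∧ σ k i j = σ k j i)
    (hinj : Function.Injective (fun k => specRad (signedAdj (G k) (σ k)))) (N : ℕ) :
    {k | m k ≤ N}.Finite := by
  set S : Set ℝ := ⋃ n ∈ Set.Iic N,
    specRad '' {A : Matrix (Fin n) (Fin n) ℝ | ∀ i j, A i j ∈ ({-1,0,1} : Set ℝ)} with hS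
  have hSfin : S.Finite := by
    refine Set.Finite.biUnion (Set.finite_Iic N) (fun n _ => Set.Finite.image _ ?_)
    have h3 : ({-1,0,1} : Set ℝ).Finite := Set.toFinite _
    have hpi : (Set.pi Set.univ (fun _ : Fin n =>
        Set.pi Set.univ (fun _ : Fin n => ({-1,0,1} : Set ℝ)))).Finite :=
      Set.Finite.pi (fun _ => Set.Finite.pi (fun _ => h3))
    refine Set.Finite.subset hpi ?_
    intro A hA
    rw [Set.mem_pi]
    intro i _
    rw [Set.mem_pi]
    intro j _
    exact hA i j
  have hsub : {k | m k ≤ N} ⊆ (fun k => specRad (signedAdj (G k) (σ k))) ⁻¹' S := by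
    intro k hk
    simp only [Set.mem_preimage, hS]
    rw [Set.mem_iUnion₂]
    refine ⟨m k, hk, ?_⟩
    refine ⟨signedAdj (G k) (σ k), ?_, rfl⟩
    intro i j
    simp only [signedAdj, Matrix.of_apply]
    by_cases h : (G k).Adj i j
    · rw [if_pos h]
      rcases (hσ k i j h).1 with h1 | h1 <;> rw [h1] <;> simp
    · rw [if_neg h]; simp
  exact Set.Finite.subset (Set.Finite.preimage (hinj.injOn) hSfin) hsub

theorem partB (m : ℕ → ℕ) (G : ∀ k, SimpleGraph (Fin (m k)))
    (σ : ∀ k, Fin (m k) → Fin (m k) → ℝ) (γ : ℝ)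
    (hconn : ∀ k, (G k).Connected)
    (hσ : ∀ k i j, (G k).Adj i j → (σ k i j = 1 ∨ σ k i j = -1) ∧ σ k i j = σ k j i)
    (hinj : Function.Injective (fun k => specRad (signedAdj (G k) (σ k))))
    (htend : Tendsto (fun k => specRad (signedAdj (G k) (σ k))) atTop (nhds γ))
    (hγle : γ ≤ 2) : γ = 2 := by
  refine le_antisymm hγle ?_
  have hev3 : ∀ᶠ k in atTop, specRad (signedAdj (G k) (σ k)) < 3 :=
    htend.eventually_lt_const (by linarith)
  have hm : ∀ N : ℕ, ∀ᶠ k in atTop, N < m k := by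
    intro N
    have h := (finite_small_card m G σ hσ hinj N).eventually_cofinite_notMem
    rw [Nat.cofinite_eq_atTop] at h
    filter_upwards [h] with k hk
    have : ¬ (m k ≤ N) := hk
    omega
  have key : ∀ L : ℕ, (2*(L:ℝ))/((L:ℝ)+1) ≤ γ := by
    intro L
    refine ge_of_tendsto htend ?_
    filter_upwards [hev3, hm (9^L)] with k h3 hmk
    have hM : (signedAdj (G k) (σ k)).IsHermitian :=
      signedAdj_isHermitian _ _ (fun i j h => (hσ k i j h).2)
    have hρ0 : 0 ≤ specRad (signedAdj (G k) (σ k)) := specRad_nonneg _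
    have hdeg : ∀ v, (G k).degree v ≤ 8 := by
      intro v
      have h1 := degree_le_specRad_sq (G k) (σ k) (hσ k) v
      have h2 : specRad (signedAdj (G k) (σ k)) ^ 2 < 9 := by nlinarith
      have h4 : ((G k).degree v : ℝ) < ((9:ℕ):ℝ) := by push_cast; linarith
      have h5 : (G k).degree v < 9 := Nat.cast_lt.mp h4
      omega
    have hcard : (8+1)^L < Fintype.card (Fin (m k)) := by
      rw [Fintype.card_fin]
      calc (8+1)^L = 9^L := by norm_num
        _ < m k := hmk
    obtain ⟨w, hinjw, hcons, hnadj⟩ := exists_path_data (hconn k) hdeg hcard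
    have h2L : 2 * (L:ℝ) ≤ specRad (signedAdj (G k) (σ k)) * ((L:ℝ)+1) := by
      refine path_rayleigh _ hM L w hinjw ?_ ?_
      · intro i hi
        have hadj := hcons i hi
        have heq : signedAdj (G k) (σ k) (w i) (w (i+1)) = σ k (w i) (w (i+1)) := by
          simp only [signedAdj, Matrix.of_apply, if_pos hadj]
        rw [heq]
        exact (hσ k _ _ hadj).1
      · intro i hi j hj h1 h2
        by_cases hij : i = j
        · subst hij
          simp only [signedAdj, Matrix.of_apply, if_neg (G k).irrefl]
        · have hna := hnadj i hi j hj h1 h2 hij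
          simp only [signedAdj, Matrix.of_apply, if_neg hna]
    rw [div_le_iff₀ (by positivity)]
    exact h2L
  have h2 : Tendsto (fun L : ℕ => (2*(L:ℝ))/((L:ℝ)+1)) atTop (nhds 2) := by
    have hcomp := tendsto_lower.comp (tendsto_add_atTop_nat 1)
    refine hcomp.congr ?_
    intro L
    have hL1 : ((L:ℝ)+1) ≠ 0 := by positivity
    show (2:ℝ) - 2/(((L+1:ℕ)):ℝ) = 2*(L:ℝ)/((L:ℝ)+1)
    push_cast
    field_simp
    ring
  exact le_of_tendsto h2 (Filter.Eventually.of_forall key)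

theorem stmt12 :
    -- (a) `2` is a limit point of signed spectral radii, witnessed by the paths
    -- `P_n` with any choice of signatures.
    (∀ σ : (n : ℕ) → Fin n → Fin n → ℝ,
      (∀ n i j, (SimpleGraph.pathGraph n).Adj i j →
          (σ n i j = 1 ∨ σ n i j = -1) ∧ σ n i j = σ n j i) →
      Filter.Tendsto
        (fun n : ℕ => specRad (signedAdj (SimpleGraph.pathGraph n) (σ n)))
        Filter.atTop (nhds 2)) ∧
    -- (b) no sequence of connected signed graphs with pairwise distinct spectral
    -- radii can converge to a value `γ ≤ 2` unless `γ = 2`.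
    (∀ (m : ℕ → ℕ) (G : ∀ k, SimpleGraph (Fin (m k)))
        (σ : ∀ k, Fin (m k) → Fin (m k) → ℝ) (γ : ℝ),
      (∀ k, (G k).Connected) →
      (∀ k i j, (G k).Adj i j → (σ k i j = 1 ∨ σ k i j = -1) ∧ σ k i j = σ k j i) →
      Function.Injective (fun k => specRad (signedAdj (G k) (σ k))) →
      Filter.Tendsto (fun k => specRad (signedAdj (G k) (σ k)))
        Filter.atTop (nhds γ) →
      γ ≤ 2 → γ = 2) := by
  exact ⟨fun σ hσ => partA σ hσ, fun m G σ γ h1 h2 h3 h4 h5 => partB m G σ γ h1 h2 h3 h4 h5⟩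
end Test
end Test
end

section
/- Let G be a finite simple graph that is a forest, and let σ̃ be any orientation of its edges, giving the skew-adjacency matrix S(G, σ̃). Then the spectrum of S(G, σ̃) equals i times the spectrum of the adjacency matrix A(G); in particular the skew spectral radius of any oriented forest equals the adjacency spectral radius of the underlying forest. -/
open SimpleGraph Matrix Filter
open scoped Classical

/-- Spectral radius of a complex matrix. -/
noncomputable def specRadC {V : Type*} [Fintype V] [DecidableEq V]
    (M : Matrix V V ℂ) : ℝ :=
  sSup ((fun z : ℂ => ‖z‖) '' spectrum ℂ M)


namespace Stmt14Aux

variable {V : Type*} {G : SimpleGraph V}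

noncomputable def auxWt (σ : V → V → ℝ) (a b : V) : ℂ := -Complex.I * (σ a b : ℂ)

noncomputable def auxProd (σ : V → V → ℝ) {a b : V} (p : G.Walk a b) : ℂ :=
  (p.darts.map fun d => auxWt σ d.toProd.1 d.toProd.2).prod

lemma auxProd_append (σ : V → V → ℝ) {a b c : V} (p : G.Walk a b) (q : G.Walk b c) :
    auxProd σ (p.append q) = auxProd σ p * auxProd σ q := by
  simp [auxProd, SimpleGraph.Walk.darts_append]

lemma auxProd_concat (σ : V → V → ℝ) {a b c : V} (p : G.Walk a b) (h : G.Adj b c) :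
    auxProd σ (p.concat h) = auxProd σ p * auxWt σ b c := by
  simp [auxProd, SimpleGraph.Walk.darts_concat]

lemma auxProd_singleton (σ : V → V → ℝ) {a b : V} (h : G.Adj a b) :
    auxProd σ (SimpleGraph.Path.singleton h).val = auxWt σ a b := by
  simp [auxProd, SimpleGraph.Path.singleton]

lemma auxWt_mul (σ : V → V → ℝ) {i j : V}
    (hsq : σ i j = 1 ∨ σ i j = -1) (hsk : σ j i = -σ i j) :
    auxWt σ j i * auxWt σ i j = 1 := by
  have h1 : (σ i j : ℂ) * σ i j = 1 := by
    rcases hsq with h | h <;> rw [h] <;> norm_num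
  have hs : (σ j i : ℂ) = -(σ i j : ℂ) := by rw [hsk]; push_cast; ring
  simp only [auxWt, hs]
  linear_combination (-(σ i j : ℂ) * (σ i j)) * Complex.I_mul_I + h1

lemma auxWt_ne_zero (σ : V → V → ℝ) {i j : V} (hsq : σ i j = 1 ∨ σ i j = -1) :
    auxWt σ i j ≠ 0 := by
  rcases hsq with h | h <;> simp [auxWt, h, Complex.I_ne_zero]

noncomputable def auxRoot (G : SimpleGraph V) (v : V) : V :=
  Quot.out (G.connectedComponentMk v)

lemma auxRoot_reach (G : SimpleGraph V) (v : V) : G.Reachable (auxRoot G v) v :=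
  SimpleGraph.ConnectedComponent.eq.mp (Quot.out_eq (G.connectedComponentMk v))

noncomputable def auxU (G : SimpleGraph V) (σ : V → V → ℝ) (v : V) : ℂ :=
  auxProd σ ((auxRoot_reach G v).some.toPath).val

lemma auxU_eq_of_path (hG : G.IsAcyclic) (σ : V → V → ℝ) {v r : V}
    (hr : auxRoot G v = r) (P : G.Path r v) :
    auxU G σ v = auxProd σ P.val := by
  subst hr
  exact congrArg (auxProd σ)
    (congrArg Subtype.val (hG.path_unique ((auxRoot_reach G v).some.toPath) P))

lemma concat_isPath {a b c : V} {p : G.Walk a b} (hp : p.IsPath) (h : G.Adj b c)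
    (hc : c ∉ p.support) : (p.concat h).IsPath := by
  rw [← SimpleGraph.Walk.isPath_reverse_iff, SimpleGraph.Walk.reverse_concat]
  exact (((SimpleGraph.Walk.isPath_reverse_iff p).mpr hp).cons (by simpa using hc))

lemma auxU_adj (hG : G.IsAcyclic) (σ : V → V → ℝ)
    (hsign : ∀ i j, G.Adj i j → σ i j = 1 ∨ σ i j = -1)
    (hskew : ∀ i j, σ i j = -σ j i) {i j : V} (h : G.Adj i j) :
    auxU G σ j = auxU G σ i * auxWt σ i j := by
  have hroot : auxRoot G j = auxRoot G i :=
    congrArg Quot.out (SimpleGraph.ConnectedComponent.eq.mpr h.symm.reachable)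
  set p : G.Path (auxRoot G i) i := (auxRoot_reach G i).some.toPath with hp
  have hui : auxU G σ i = auxProd σ p.val := rfl
  by_cases hj : j ∈ p.val.support
  · -- the path to i passes through j; the tail is the single edge j-i
    have hq : (p.val.takeUntil j hj).IsPath := p.2.takeUntil hj
    have hd : (p.val.dropUntil j hj).IsPath := p.2.dropUntil hj
    have hdrop : p.val.dropUntil j hj = (SimpleGraph.Path.singleton h.symm).val :=
      congrArg Subtype.val (hG.path_unique ⟨_, hd⟩ (SimpleGraph.Path.singleton h.symm))
    have hsplit : (p.val.takeUntil j hj).append (p.val.dropUntil j hj) = p.val :=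
      SimpleGraph.Walk.take_spec _ hj
    have huj : auxU G σ j = auxProd σ (p.val.takeUntil j hj) :=
      auxU_eq_of_path hG σ hroot ⟨_, hq⟩
    have key : auxU G σ i = auxU G σ j * auxWt σ j i := by
      rw [hui, ← hsplit, auxProd_append, hdrop, auxProd_singleton, huj]
    rw [key, mul_assoc, auxWt_mul σ (hsign i j h) (hskew j i), mul_one]
  · -- extend the path to i by the edge i-j
    have hpath : (p.val.concat h).IsPath := concat_isPath p.2 h hj
    have huj : auxU G σ j = auxProd σ (p.val.concat h) :=
      auxU_eq_of_path hG σ hroot ⟨_, hpath⟩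
    rw [huj, auxProd_concat, hui]

lemma auxU_ne_zero (σ : V → V → ℝ)
    (hsign : ∀ i j, G.Adj i j → σ i j = 1 ∨ σ i j = -1) (v : V) :
    auxU G σ v ≠ 0 := by
  intro h0
  rw [auxU, auxProd, List.prod_eq_zero_iff] at h0
  obtain ⟨x, hx, h0⟩ := List.mem_map.mp h0
  exact auxWt_ne_zero σ (hsign _ _ x.adj) h0

end Stmt14Aux

open Stmt14Aux

private theorem stmt14_spec {V : Type*} [Fintype V] [DecidableEq V]
    (G : SimpleGraph V) (hG : G.IsAcyclic) (σ : V → V → ℝ)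
    (hsign : ∀ i j, G.Adj i j → σ i j = 1 ∨ σ i j = -1)
    (hskew : ∀ i j, σ i j = -σ j i) :
    spectrum ℂ ((signedAdj G σ).map (Complex.ofReal))
        = (fun z => Complex.I * z) '' spectrum ℂ (G.adjMatrix ℂ) := by
  classical
  set S : Matrix V V ℂ := (signedAdj G σ).map Complex.ofReal with hS
  set u : V → ℂ := auxU G σ with hu
  have hu0 : ∀ v, u v ≠ 0 := auxU_ne_zero σ hsign
  set D : Matrix V V ℂ := Matrix.diagonal u with hD
  have hDdet : IsUnit D.det := by
    rw [hD, Matrix.det_diagonal]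
    exact (Finset.prod_ne_zero_iff.mpr fun v _ => hu0 v).isUnit
  obtain ⟨Du, hDu⟩ := (Matrix.isUnit_iff_isUnit_det D).mpr hDdet
  have key : D * S = (Complex.I • G.adjMatrix ℂ) * D := by
    ext i j
    simp only [hD, hS, Matrix.diagonal_mul, Matrix.mul_diagonal, Matrix.smul_apply,
      Matrix.map_apply, signedAdj, Matrix.of_apply, SimpleGraph.adjMatrix_apply, smul_eq_mul]
    by_cases h : G.Adj i j
    · simp only [h, if_true]
      have hadj := auxU_adj hG σ hsign hskew h
      rw [hu, hadj]
      simp only [auxWt]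
      ring_nf
      rw [Complex.I_sq]
      ring
    · simp [h]
  have hconj : S = Du⁻¹.val * (Complex.I • G.adjMatrix ℂ) * Du.val := by
    have h1 : Du⁻¹.val * (D * S) = Du⁻¹.val * ((Complex.I • G.adjMatrix ℂ) * D) := by
      rw [key]
    rw [← hDu, ← Matrix.mul_assoc, Units.inv_mul, Matrix.one_mul] at h1
    rw [h1, ← Matrix.mul_assoc]
  have hspec1 : spectrum ℂ S = spectrum ℂ (Complex.I • G.adjMatrix ℂ) := by
    rw [hconj]
    exact spectrum.units_conjugate'
  have hI : (Complex.I • G.adjMatrix ℂ)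
      = (Units.mk0 Complex.I Complex.I_ne_zero : ℂˣ) • G.adjMatrix ℂ := rfl
  rw [hspec1, hI, spectrum.unit_smul_eq_smul]
  ext z
  simp only [Set.mem_smul_set, Set.mem_image, Units.smul_def, smul_eq_mul, Units.val_mk0]

theorem stmt14 {V : Type*} [Fintype V] [DecidableEq V]
    (G : SimpleGraph V) (hG : G.IsAcyclic) (σ : V → V → ℝ)
    (hsign : ∀ i j, G.Adj i j → σ i j = 1 ∨ σ i j = -1)
    (hskew : ∀ i j, σ i j = -σ j i) :
    spectrum ℂ ((signedAdj G σ).map (Complex.ofReal))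
        = (fun z => Complex.I * z) '' spectrum ℂ (G.adjMatrix ℂ) ∧
    specRadC ((signedAdj G σ).map (Complex.ofReal))
        = specRadC (G.adjMatrix ℂ) := by
  have h1 := stmt14_spec G hG σ hsign hskew
  refine ⟨h1, ?_⟩
  unfold specRadC
  congr 1
  rw [h1, Set.image_image]
  refine Set.image_congr fun z _ => ?_
  rw [norm_mul, Complex.norm_I, one_mul]
end

section
/- Let G' = G₁u:vG₂ be the graph obtained from vertex-disjoint graphs G₁, G₂ by adding an edge between u ∈ V(G₁) and v ∈ V(G₂). For α ∈ [0,1], the A_α-characteristic polynomials satisfy φ(G') = φ(G₁)φ(G₂) − αφ(G₁)_u φ(G₂) − αφ(G₁)φ(G₂)_v + (2α−1)φ(G₁)_u φ(G₂)_v, where φ(H) = det(λI − A_α(H)) and φ(H)_w denotes the characteristic polynomial of the principal submatrix of A_α(H) obtained by deleting the row and column of w — with the convention that in G' the degrees of u and v are each increased by 1. -/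
open SimpleGraph Matrix Filter
open scoped Classical

/-- The graph `G₁ u:v G₂`: disjoint union of `G₁` and `G₂` plus the edge `uv`. -/
def joinGraph {V₁ V₂ : Type*} (G₁ : SimpleGraph V₁) (G₂ : SimpleGraph V₂)
    (u : V₁) (v : V₂) : SimpleGraph (V₁ ⊕ V₂) where
  Adj x y :=
    match x, y with
    | Sum.inl a, Sum.inl b => G₁.Adj a b
    | Sum.inr a, Sum.inr b => G₂.Adj a b
    | Sum.inl a, Sum.inr b => a = u ∧ b = v
    | Sum.inr b, Sum.inl a => a = u ∧ b = v
  symm := by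
    constructor
    rintro (a | a) (b | b) h
    · exact G₁.adj_symm h
    · exact h
    · exact h
    · exact G₂.adj_symm h
  loopless := by
    constructor
    rintro (a | a) h
    · exact G₁.irrefl h
    · exact G₂.irrefl h

/-- The principal submatrix of `A_α(G)` deleting the row/column of `w`. -/
noncomputable def AalphaDel {V : Type*} [Fintype V] [DecidableEq V]
    (G : SimpleGraph V) (α : ℝ) (w : V) : Matrix {x : V // x ≠ w} {x : V // x ≠ w} ℝ :=
  (Aalpha G α).submatrix Subtype.val Subtype.val


/-- Determinant is zero when all `inl`-rows and the `inr v`-row vanish on `inr`-columns. -/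
lemma det_zero_aux {m n : Type*} [Fintype m] [DecidableEq m] [Fintype n] [DecidableEq n]
    (M : Matrix (m ⊕ n) (m ⊕ n) ℝ) (v : n)
    (h1 : ∀ (w : m) (x : n), M (Sum.inl w) (Sum.inr x) = 0)
    (h2 : ∀ x : n, M (Sum.inr v) (Sum.inr x) = 0) : M.det = 0 := by
  rw [Matrix.det_apply]
  refine Finset.sum_eq_zero fun σ _ => ?_
  have hx : ∃ x : n, M (σ (Sum.inr x)) (Sum.inr x) = 0 := by
    by_contra h
    push_neg at h
    have hg : ∀ x : n, ∃ y : n, y ≠ v ∧ σ (Sum.inr x) = Sum.inr y := by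
      intro x
      rcases hsx : σ (Sum.inr x) with w | y
      · exact absurd (hsx ▸ h1 w x) (h x)
      · refine ⟨y, ?_, rfl⟩
        rintro rfl
        exact h x (hsx ▸ h2 x)
    choose g hgv hgσ using hg
    have hginj : Function.Injective g := by
      intro a b hab
      have := σ.injective ((hgσ a).trans (hab ▸ (hgσ b).symm))
      exact Sum.inr_injective this
    obtain ⟨x, hx⟩ := (Finite.injective_iff_surjective.mp hginj) v
    exact hgv x hx
  obtain ⟨x, hx⟩ := hx
  have hp : (∏ i : m ⊕ n, M (σ i) i) = 0 :=
    Finset.prod_eq_zero (Finset.mem_univ (Sum.inr x : m ⊕ n)) hx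
  rw [hp, smul_zero]

/-- Mirror version. -/
lemma det_zero_aux' {m n : Type*} [Fintype m] [DecidableEq m] [Fintype n] [DecidableEq n]
    (M : Matrix (m ⊕ n) (m ⊕ n) ℝ) (u : m)
    (h1 : ∀ (x : n) (w : m), M (Sum.inr x) (Sum.inl w) = 0)
    (h2 : ∀ w : m, M (Sum.inl u) (Sum.inl w) = 0) : M.det = 0 := by
  have := Matrix.det_submatrix_equiv_self (Equiv.sumComm n m) M
  rw [← this]
  exact det_zero_aux _ u (fun w x => h1 w x) (fun w => h2 w)

/-- Cofactor-deletion: if row `i` is the standard basis vector `e_i`, the determinant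
equals the determinant of the matrix with row and column `i` deleted. -/
lemma det_delete {n m : Type*} [Fintype n] [DecidableEq n] [Fintype m] [DecidableEq m]
    (M : Matrix n n ℝ) (i : n) (f : m → n) (hf : Function.Injective f)
    (hi : ∀ j, f j ≠ i) (hcov : ∀ x : n, x = i ∨ ∃ j, f j = x)
    (h : M i = Pi.single i 1) :
    M.det = (M.submatrix f f).det := by
  have hbij : Function.Bijective (Sum.elim f (fun _ : Unit => i)) := by
    constructor
    · rintro (a | a) (b | b) hab <;> simp only [Sum.elim_inl, Sum.elim_inr] at hab
      · exact congrArg Sum.inl (hf hab)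
      · exact absurd hab (hi a)
      · exact absurd hab.symm (hi b)
      · rfl
    · intro x
      rcases hcov x with rfl | ⟨j, rfl⟩
      · exact ⟨Sum.inr (), rfl⟩
      · exact ⟨Sum.inl j, rfl⟩
  rw [← Matrix.det_submatrix_equiv_self (Equiv.ofBijective _ hbij) M]
  have hM : M.submatrix (Equiv.ofBijective _ hbij) (Equiv.ofBijective _ hbij)
      = Matrix.fromBlocks (M.submatrix f f)
        (Matrix.of fun j (_ : Unit) => M (f j) i) 0 (Matrix.of fun _ _ => 1) := by
    ext x y
    rcases x with a | a <;> rcases y with b | b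
    · rfl
    · rfl
    · show M i (f b) = 0
      rw [h]
      exact Pi.single_eq_of_ne (hi b) 1
    · show M i i = 1
      rw [h]; simp
  rw [hM, Matrix.det_fromBlocks_zero₂₁]
  simp

section Blocks

variable {V₁ V₂ : Type*} [Fintype V₁] [DecidableEq V₁] [Fintype V₂] [DecidableEq V₂]
  (A : Matrix V₁ V₁ ℝ) (B : Matrix V₂ V₂ ℝ) (u : V₁) (v : V₂)

lemma updRow_comm {n m : Type*} [DecidableEq n] (M : Matrix n m ℝ) {i j : n} (hij : i ≠ j)
    (r s : m → ℝ) :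
    (M.updateRow i r).updateRow j s = (M.updateRow j s).updateRow i r := by
  ext k l
  rcases eq_or_ne k i with rfl | hki <;> rcases eq_or_ne k j with rfl | hkj
  · exact absurd rfl hij
  · simp [Matrix.updateRow_apply, hij.symm, hkj]
  · simp [Matrix.updateRow_apply, hij, hki]
  · simp [Matrix.updateRow_apply, hki, hkj]

lemma det_blocks : (Matrix.fromBlocks A 0 0 B).det = A.det * B.det :=
  Matrix.det_fromBlocks_zero₂₁ A 0 B

lemma det_delR :
    ((Matrix.fromBlocks A 0 0 B).updateRow (Sum.inr v) (Pi.single (Sum.inr v) 1)).det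
      = A.det * (B.submatrix (fun x : {x : V₂ // x ≠ v} => (x : V₂))
          (fun x : {x : V₂ // x ≠ v} => (x : V₂))).det := by
  rw [det_delete _ (Sum.inr v)
      (Sum.map id (fun x : {x : V₂ // x ≠ v} => (x : V₂)))
      (Sum.map_injective.mpr ⟨Function.injective_id, Subtype.val_injective⟩)
      (by rintro (a | ⟨b, hb⟩) h
          · exact Sum.inl_ne_inr h
          · exact hb (Sum.inr_injective h))
      (by rintro (a | b)
          · exact Or.inr ⟨Sum.inl a, rfl⟩
          · rcases eq_or_ne b v with rfl | hb
            · exact Or.inl rfl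
            · exact Or.inr ⟨Sum.inr ⟨b, hb⟩, rfl⟩)
      (Matrix.updateRow_self)]
  have : ((Matrix.fromBlocks A 0 0 B).updateRow (Sum.inr v) (Pi.single (Sum.inr v) 1)).submatrix
        (Sum.map id (fun x : {x : V₂ // x ≠ v} => (x : V₂)))
        (Sum.map id (fun x : {x : V₂ // x ≠ v} => (x : V₂)))
      = Matrix.fromBlocks A 0 0 (B.submatrix (fun x : {x : V₂ // x ≠ v} => (x : V₂))
          (fun x : {x : V₂ // x ≠ v} => (x : V₂))) := by
    ext x y
    rcases x with a | ⟨a, ha⟩ <;> rcases y with b | ⟨b, hb⟩ <;>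
      simp only [Matrix.submatrix_apply, Sum.map_inl, Sum.map_inr, id_eq]
    · rw [Matrix.updateRow_ne (Sum.inl_ne_inr : (Sum.inl a : V₁ ⊕ V₂) ≠ Sum.inr v)]; rfl
    · rw [Matrix.updateRow_ne (Sum.inl_ne_inr : (Sum.inl a : V₁ ⊕ V₂) ≠ Sum.inr v)]; rfl
    · rw [Matrix.updateRow_ne (fun h => ha (Sum.inr_injective h) :
        (Sum.inr a : V₁ ⊕ V₂) ≠ Sum.inr v)]; rfl
    · rw [Matrix.updateRow_ne (fun h => ha (Sum.inr_injective h) :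
        (Sum.inr a : V₁ ⊕ V₂) ≠ Sum.inr v)]; rfl
  rw [this, det_blocks]

lemma det_delL :
    ((Matrix.fromBlocks A 0 0 B).updateRow (Sum.inl u) (Pi.single (Sum.inl u) 1)).det
      = (A.submatrix (fun x : {x : V₁ // x ≠ u} => (x : V₁))
          (fun x : {x : V₁ // x ≠ u} => (x : V₁))).det * B.det := by
  rw [det_delete _ (Sum.inl u)
      (Sum.map (fun x : {x : V₁ // x ≠ u} => (x : V₁)) id)
      (Sum.map_injective.mpr ⟨Subtype.val_injective, Function.injective_id⟩)
      (by rintro (⟨a, ha⟩ | b) h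
          · exact ha (Sum.inl_injective h)
          · exact Sum.inr_ne_inl h)
      (by rintro (a | b)
          · rcases eq_or_ne a u with rfl | ha
            · exact Or.inl rfl
            · exact Or.inr ⟨Sum.inl ⟨a, ha⟩, rfl⟩
          · exact Or.inr ⟨Sum.inr b, rfl⟩)
      (Matrix.updateRow_self)]
  have : ((Matrix.fromBlocks A 0 0 B).updateRow (Sum.inl u) (Pi.single (Sum.inl u) 1)).submatrix
        (Sum.map (fun x : {x : V₁ // x ≠ u} => (x : V₁)) id)
        (Sum.map (fun x : {x : V₁ // x ≠ u} => (x : V₁)) id)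
      = Matrix.fromBlocks (A.submatrix (fun x : {x : V₁ // x ≠ u} => (x : V₁))
          (fun x : {x : V₁ // x ≠ u} => (x : V₁))) 0 0 B := by
    ext x y
    rcases x with ⟨a, ha⟩ | a <;> rcases y with ⟨b, hb⟩ | b <;>
      simp only [Matrix.submatrix_apply, Sum.map_inl, Sum.map_inr, id_eq]
    · rw [Matrix.updateRow_ne (fun h => ha (Sum.inl_injective h) :
        (Sum.inl a : V₁ ⊕ V₂) ≠ Sum.inl u)]; rfl
    · rw [Matrix.updateRow_ne (fun h => ha (Sum.inl_injective h) :
        (Sum.inl a : V₁ ⊕ V₂) ≠ Sum.inl u)]; rfl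
    · rw [Matrix.updateRow_ne (Sum.inr_ne_inl : (Sum.inr a : V₁ ⊕ V₂) ≠ Sum.inl u)]; rfl
    · rw [Matrix.updateRow_ne (Sum.inr_ne_inl : (Sum.inr a : V₁ ⊕ V₂) ≠ Sum.inl u)]; rfl
  rw [this, det_blocks]

lemma det_delLR :
    (((Matrix.fromBlocks A 0 0 B).updateRow (Sum.inl u) (Pi.single (Sum.inl u) 1)).updateRow
        (Sum.inr v) (Pi.single (Sum.inr v) 1)).det
      = (A.submatrix (fun x : {x : V₁ // x ≠ u} => (x : V₁))
          (fun x : {x : V₁ // x ≠ u} => (x : V₁))).det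
        * (B.submatrix (fun x : {x : V₂ // x ≠ v} => (x : V₂))
          (fun x : {x : V₂ // x ≠ v} => (x : V₂))).det := by
  rw [det_delete _ (Sum.inr v)
      (Sum.map id (fun x : {x : V₂ // x ≠ v} => (x : V₂)))
      (Sum.map_injective.mpr ⟨Function.injective_id, Subtype.val_injective⟩)
      (by rintro (a | ⟨b, hb⟩) h
          · exact Sum.inl_ne_inr h
          · exact hb (Sum.inr_injective h))
      (by rintro (a | b)
          · exact Or.inr ⟨Sum.inl a, rfl⟩
          · rcases eq_or_ne b v with rfl | hb
            · exact Or.inl rfl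
            · exact Or.inr ⟨Sum.inr ⟨b, hb⟩, rfl⟩)
      (Matrix.updateRow_self)]
  have : (((Matrix.fromBlocks A 0 0 B).updateRow (Sum.inl u) (Pi.single (Sum.inl u) 1)).updateRow
        (Sum.inr v) (Pi.single (Sum.inr v) 1)).submatrix
        (Sum.map id (fun x : {x : V₂ // x ≠ v} => (x : V₂)))
        (Sum.map id (fun x : {x : V₂ // x ≠ v} => (x : V₂)))
      = (Matrix.fromBlocks A 0 0 (B.submatrix (fun x : {x : V₂ // x ≠ v} => (x : V₂))
          (fun x : {x : V₂ // x ≠ v} => (x : V₂)))).updateRow (Sum.inl u)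
          (Pi.single (Sum.inl u) 1) := by
    ext x y
    rcases x with a | ⟨a, ha⟩ <;> rcases y with b | ⟨b, hb⟩ <;>
      simp only [Matrix.submatrix_apply, Sum.map_inl, Sum.map_inr, id_eq,
        Matrix.updateRow_apply, Pi.single_apply] <;>
      split_ifs <;> simp_all
  rw [this, det_delL]

lemma det_zeroR :
    ((Matrix.fromBlocks A 0 0 B).updateRow (Sum.inr v) (Pi.single (Sum.inl u) 1)).det = 0 := by
  refine det_zero_aux _ v (fun w x => ?_) (fun x => ?_)
  · rw [Matrix.updateRow_ne (Sum.inl_ne_inr : (Sum.inl w : V₁ ⊕ V₂) ≠ Sum.inr v)]; rfl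
  · rw [Matrix.updateRow_self]
    exact Pi.single_eq_of_ne Sum.inr_ne_inl 1

lemma det_zeroL :
    ((Matrix.fromBlocks A 0 0 B).updateRow (Sum.inl u) (Pi.single (Sum.inr v) 1)).det = 0 := by
  refine det_zero_aux' _ u (fun x w => ?_) (fun w => ?_)
  · rw [Matrix.updateRow_ne (Sum.inr_ne_inl : (Sum.inr x : V₁ ⊕ V₂) ≠ Sum.inl u)]; rfl
  · rw [Matrix.updateRow_self]
    exact Pi.single_eq_of_ne Sum.inl_ne_inr 1

lemma det_swapUV :
    (((Matrix.fromBlocks A 0 0 B).updateRow (Sum.inl u) (Pi.single (Sum.inr v) 1)).updateRow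
        (Sum.inr v) (Pi.single (Sum.inl u) 1)).det
      = -((A.submatrix (fun x : {x : V₁ // x ≠ u} => (x : V₁))
          (fun x : {x : V₁ // x ≠ u} => (x : V₁))).det
        * (B.submatrix (fun x : {x : V₂ // x ≠ v} => (x : V₂))
          (fun x : {x : V₂ // x ≠ v} => (x : V₂))).det) := by
  set P := ((Matrix.fromBlocks A 0 0 B).updateRow (Sum.inl u) (Pi.single (Sum.inr v) 1)).updateRow
      (Sum.inr v) (Pi.single (Sum.inl u) 1) with hP
  set Q := ((Matrix.fromBlocks A 0 0 B).updateRow (Sum.inl u) (Pi.single (Sum.inl u) 1)).updateRow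
      (Sum.inr v) (Pi.single (Sum.inr v) 1) with hQ
  have hne : (Sum.inl u : V₁ ⊕ V₂) ≠ Sum.inr v := Sum.inl_ne_inr
  have key : P.submatrix (Equiv.swap (Sum.inl u) (Sum.inr v)) id = Q := by
    ext x y
    simp only [Matrix.submatrix_apply, id_eq]
    rcases eq_or_ne x (Sum.inl u) with rfl | hxu
    · rw [Equiv.swap_apply_left, hP, hQ, Matrix.updateRow_self,
        Matrix.updateRow_ne hne, Matrix.updateRow_self]
    · rcases eq_or_ne x (Sum.inr v) with rfl | hxv
      · rw [Equiv.swap_apply_right, hP, hQ, Matrix.updateRow_ne hne,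
          Matrix.updateRow_self, Matrix.updateRow_self]
      · rw [Equiv.swap_apply_of_ne_of_ne hxu hxv, hP, hQ,
          Matrix.updateRow_ne hxv, Matrix.updateRow_ne hxu,
          Matrix.updateRow_ne hxv, Matrix.updateRow_ne hxu]
  have hdet := Matrix.det_permute (Equiv.swap (Sum.inl u) (Sum.inr v)) P
  rw [key, Equiv.Perm.sign_swap hne] at hdet
  have := det_delLR A B u v
  rw [← hQ] at this
  rw [this] at hdet
  norm_num at hdet
  linarith [hdet]

end Blocks

section Graph

variable {V₁ V₂ : Type*} [Fintype V₁] [DecidableEq V₁] [Fintype V₂] [DecidableEq V₂]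
  (G₁ : SimpleGraph V₁) (G₂ : SimpleGraph V₂) (u : V₁) (v : V₂)

set_option linter.unusedSectionVars false in
lemma join_adj_ll (a b : V₁) :
    (joinGraph G₁ G₂ u v).Adj (Sum.inl a) (Sum.inl b) ↔ G₁.Adj a b := Iff.rfl

set_option linter.unusedSectionVars false in
lemma join_adj_rr (a b : V₂) :
    (joinGraph G₁ G₂ u v).Adj (Sum.inr a) (Sum.inr b) ↔ G₂.Adj a b := Iff.rfl

set_option linter.unusedSectionVars false in
lemma join_adj_lr (a : V₁) (b : V₂) :
    (joinGraph G₁ G₂ u v).Adj (Sum.inl a) (Sum.inr b) ↔ a = u ∧ b = v := Iff.rfl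

set_option linter.unusedSectionVars false in
lemma join_adj_rl (b : V₂) (a : V₁) :
    (joinGraph G₁ G₂ u v).Adj (Sum.inr b) (Sum.inl a) ↔ a = u ∧ b = v := Iff.rfl

lemma join_degree_inl (a : V₁) :
    (joinGraph G₁ G₂ u v).degree (Sum.inl a)
      = G₁.degree a + (if a = u then 1 else 0) := by
  classical
  have h : (joinGraph G₁ G₂ u v).neighborFinset (Sum.inl a)
      = ((G₁.neighborFinset a).map ⟨Sum.inl, Sum.inl_injective⟩)
        ∪ (if a = u then {Sum.inr v} else ∅) := by
    ext x
    rcases x with b | b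
    · rw [SimpleGraph.mem_neighborFinset, Finset.mem_union]
      split_ifs with h <;> simp [join_adj_ll]
    · rw [SimpleGraph.mem_neighborFinset, Finset.mem_union]
      split_ifs with h <;> simp [join_adj_lr, h]
  rw [SimpleGraph.degree, h, Finset.card_union_of_disjoint, Finset.card_map]
  · congr 1
    split_ifs <;> simp
  · rw [Finset.disjoint_left]
    rintro x hx hx'
    obtain ⟨b, -, rfl⟩ := Finset.mem_map.mp hx
    split_ifs at hx' with hh
    · simp at hx'
    · simp at hx'

lemma join_degree_inr (b : V₂) :
    (joinGraph G₁ G₂ u v).degree (Sum.inr b)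
      = G₂.degree b + (if b = v then 1 else 0) := by
  classical
  have h : (joinGraph G₁ G₂ u v).neighborFinset (Sum.inr b)
      = ((G₂.neighborFinset b).map ⟨Sum.inr, Sum.inr_injective⟩)
        ∪ (if b = v then {Sum.inl u} else ∅) := by
    ext x
    rcases x with a | a
    · rw [SimpleGraph.mem_neighborFinset, Finset.mem_union]
      split_ifs with h <;> simp [join_adj_rl, h]
    · rw [SimpleGraph.mem_neighborFinset, Finset.mem_union]
      split_ifs with h <;> simp [join_adj_rr]
  rw [SimpleGraph.degree, h, Finset.card_union_of_disjoint, Finset.card_map]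
  · congr 1
    split_ifs <;> simp
  · rw [Finset.disjoint_left]
    rintro x hx hx'
    obtain ⟨a, -, rfl⟩ := Finset.mem_map.mp hx
    split_ifs at hx' with hh
    · simp at hx'
    · simp at hx'

end Graph


lemma join_matrix_decomp {V₁ V₂ : Type*} [Fintype V₁] [DecidableEq V₁] [Fintype V₂]
    [DecidableEq V₂] (G₁ : SimpleGraph V₁) (G₂ : SimpleGraph V₂) (u : V₁) (v : V₂)
    (α lam : ℝ) :
    lam • (1 : Matrix (V₁ ⊕ V₂) (V₁ ⊕ V₂) ℝ) - Aalpha (joinGraph G₁ G₂ u v) α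
      = ((Matrix.fromBlocks (lam • 1 - Aalpha G₁ α) 0 0
            (lam • 1 - Aalpha G₂ α)).updateRow (Sum.inl u)
            ((Matrix.fromBlocks (lam • 1 - Aalpha G₁ α) 0 0 (lam • 1 - Aalpha G₂ α)) (Sum.inl u)
              + ((-α) • (Pi.single (Sum.inl u) 1 : (V₁ ⊕ V₂) → ℝ) + (-(1 - α)) • (Pi.single (Sum.inr v) 1 : (V₁ ⊕ V₂) → ℝ)))).updateRow
          (Sum.inr v)
          ((Matrix.fromBlocks (lam • 1 - Aalpha G₁ α) 0 0 (lam • 1 - Aalpha G₂ α)) (Sum.inr v)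
            + ((-(1 - α)) • (Pi.single (Sum.inl u) 1 : (V₁ ⊕ V₂) → ℝ) + (-α) • (Pi.single (Sum.inr v) 1 : (V₁ ⊕ V₂) → ℝ))) := by
  have hdegL := join_degree_inl G₁ G₂ u v
  have hdegR := join_degree_inr G₁ G₂ u v
  ext x y
  rcases x with a | a <;> rcases y with b | b <;>
    simp only [Matrix.sub_apply, Matrix.smul_apply, Matrix.one_apply, Aalpha,
      Matrix.add_apply, Matrix.diagonal_apply, SimpleGraph.adjMatrix_apply,
      Matrix.updateRow_apply, Pi.add_apply, Pi.smul_apply,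
      Matrix.fromBlocks_apply₁₁, Matrix.fromBlocks_apply₁₂, Matrix.fromBlocks_apply₂₁,
      Matrix.fromBlocks_apply₂₂, Pi.single_apply, smul_eq_mul,
      hdegL, hdegR, join_adj_ll, join_adj_lr, join_adj_rl, join_adj_rr, Sum.inl.injEq,
      Sum.inr.injEq, Matrix.zero_apply, reduceCtorEq, if_false, if_true, Nat.cast_add,
      Nat.cast_ite, Nat.cast_one, Nat.cast_zero] <;>
    split_ifs <;> push_cast <;> subst_vars
  all_goals try ring
  all_goals try contradiction
  all_goals try exact absurd ‹G₁.Adj _ _› G₁.irrefl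
  all_goals try exact absurd ‹G₂.Adj _ _› G₂.irrefl
  all_goals try exact absurd (‹_ ∧ _›).2 ‹_›
  all_goals try exact absurd (‹_ ∧ _›).1 ‹_›
  all_goals try exact absurd ⟨rfl, rfl⟩ ‹¬(_ ∧ _)›
  all_goals try (obtain ⟨rfl, rfl⟩ := ‹_ ∧ _›; ring)

theorem stmt16 {V₁ V₂ : Type*} [Fintype V₁] [DecidableEq V₁] [Fintype V₂] [DecidableEq V₂]
    (G₁ : SimpleGraph V₁) (G₂ : SimpleGraph V₂) (u : V₁) (v : V₂)
    (α : ℝ) (hα : α ∈ Set.Icc (0:ℝ) 1) :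
    ∀ lam : ℝ,
      (lam • (1 : Matrix (V₁ ⊕ V₂) (V₁ ⊕ V₂) ℝ) - Aalpha (joinGraph G₁ G₂ u v) α).det
        = (lam • 1 - Aalpha G₁ α).det * (lam • 1 - Aalpha G₂ α).det
          - α * (lam • 1 - AalphaDel G₁ α u).det * (lam • 1 - Aalpha G₂ α).det
          - α * (lam • 1 - Aalpha G₁ α).det * (lam • 1 - AalphaDel G₂ α v).det
          + (2*α - 1) * (lam • 1 - AalphaDel G₁ α u).det
              * (lam • 1 - AalphaDel G₂ α v).det := by
  intro lam
  classical
  rw [join_matrix_decomp G₁ G₂ u v α lam]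
  set A : Matrix V₁ V₁ ℝ := lam • 1 - Aalpha G₁ α with hA
  set B : Matrix V₂ V₂ ℝ := lam • 1 - Aalpha G₂ α with hB
  have hne : (Sum.inl u : V₁ ⊕ V₂) ≠ Sum.inr v := Sum.inl_ne_inr
  have hne' : (Sum.inr v : V₁ ⊕ V₂) ≠ Sum.inl u := Sum.inr_ne_inl
  have hAu : (A.submatrix (fun x : {x : V₁ // x ≠ u} => (x : V₁)) (fun x : {x : V₁ // x ≠ u} => (x : V₁))).det = (lam • 1 - AalphaDel G₁ α u).det := by
    congr 1
    ext i j
    simp [hA, AalphaDel, Matrix.one_apply, Matrix.submatrix_apply, Matrix.sub_apply,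
      Matrix.smul_apply, Subtype.coe_inj]
  have hBv : (B.submatrix (fun x : {x : V₂ // x ≠ v} => (x : V₂)) (fun x : {x : V₂ // x ≠ v} => (x : V₂))).det = (lam • 1 - AalphaDel G₂ α v).det := by
    congr 1
    ext i j
    simp [hB, AalphaDel, Matrix.one_apply, Matrix.submatrix_apply, Matrix.sub_apply,
      Matrix.smul_apply, Subtype.coe_inj]
  have expand : ∀ (Y : Matrix (V₁ ⊕ V₂) (V₁ ⊕ V₂) ℝ) (i : V₁ ⊕ V₂) (c d : ℝ)
      (r s : (V₁ ⊕ V₂) → ℝ),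
      (Y.updateRow i (Y i + (c • r + d • s))).det
        = Y.det + (c * (Y.updateRow i r).det + d * (Y.updateRow i s).det) := by
    intro Y i c d r s
    rw [Matrix.det_updateRow_add, Matrix.det_updateRow_add, Matrix.det_updateRow_smul,
      Matrix.det_updateRow_smul, Matrix.updateRow_eq_self]
  have h1 : (Matrix.fromBlocks A 0 0 B) (Sum.inr v) = ((Matrix.fromBlocks A 0 0 B).updateRow (Sum.inl u) ((Matrix.fromBlocks A 0 0 B) (Sum.inl u) + ((-α) • (Pi.single (Sum.inl u) 1 : (V₁ ⊕ V₂) → ℝ) + (-(1 - α)) • (Pi.single (Sum.inr v) 1 : (V₁ ⊕ V₂) → ℝ)))) (Sum.inr v) := (Matrix.updateRow_ne hne').symm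
  rw [h1, expand]
  have d1 : ((Matrix.fromBlocks A 0 0 B).updateRow (Sum.inl u) ((Matrix.fromBlocks A 0 0 B) (Sum.inl u) + ((-α) • (Pi.single (Sum.inl u) 1 : (V₁ ⊕ V₂) → ℝ) + (-(1 - α)) • (Pi.single (Sum.inr v) 1 : (V₁ ⊕ V₂) → ℝ)))).det
      = A.det * B.det + ((-α) * ((A.submatrix (fun x : {x : V₁ // x ≠ u} => (x : V₁)) (fun x : {x : V₁ // x ≠ u} => (x : V₁))).det * B.det) + (-(1 - α)) * 0) := by
    rw [expand, det_blocks, det_delL, det_zeroL]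
  have d2 : (((Matrix.fromBlocks A 0 0 B).updateRow (Sum.inl u) ((Matrix.fromBlocks A 0 0 B) (Sum.inl u) + ((-α) • (Pi.single (Sum.inl u) 1 : (V₁ ⊕ V₂) → ℝ) + (-(1 - α)) • (Pi.single (Sum.inr v) 1 : (V₁ ⊕ V₂) → ℝ)))).updateRow (Sum.inr v) (Pi.single (Sum.inl u) 1 : (V₁ ⊕ V₂) → ℝ)).det
      = (1 - α) * ((A.submatrix (fun x : {x : V₁ // x ≠ u} => (x : V₁)) (fun x : {x : V₁ // x ≠ u} => (x : V₁))).det * (B.submatrix (fun x : {x : V₂ // x ≠ v} => (x : V₂)) (fun x : {x : V₂ // x ≠ v} => (x : V₂))).det) := by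
    rw [updRow_comm (Matrix.fromBlocks A 0 0 B) hne]
    have hrow : (Matrix.fromBlocks A 0 0 B) (Sum.inl u) = ((Matrix.fromBlocks A 0 0 B).updateRow (Sum.inr v) (Pi.single (Sum.inl u) 1 : (V₁ ⊕ V₂) → ℝ)) (Sum.inl u) :=
      (Matrix.updateRow_ne hne).symm
    rw [hrow, expand, det_zeroR]
    have z1 : (((Matrix.fromBlocks A 0 0 B).updateRow (Sum.inr v) (Pi.single (Sum.inl u) 1 : (V₁ ⊕ V₂) → ℝ)).updateRow (Sum.inl u) (Pi.single (Sum.inl u) 1 : (V₁ ⊕ V₂) → ℝ)).det = 0 := by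
      apply Matrix.det_zero_of_row_eq hne
      rw [Matrix.updateRow_self, Matrix.updateRow_ne hne', Matrix.updateRow_self]
    have z2 : (((Matrix.fromBlocks A 0 0 B).updateRow (Sum.inr v) (Pi.single (Sum.inl u) 1 : (V₁ ⊕ V₂) → ℝ)).updateRow (Sum.inl u) (Pi.single (Sum.inr v) 1 : (V₁ ⊕ V₂) → ℝ)).det
        = -((A.submatrix (fun x : {x : V₁ // x ≠ u} => (x : V₁)) (fun x : {x : V₁ // x ≠ u} => (x : V₁))).det * (B.submatrix (fun x : {x : V₂ // x ≠ v} => (x : V₂)) (fun x : {x : V₂ // x ≠ v} => (x : V₂))).det) := by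
      rw [updRow_comm (Matrix.fromBlocks A 0 0 B) hne']
      exact det_swapUV A B u v
    rw [z1, z2]
    ring
  have d3 : (((Matrix.fromBlocks A 0 0 B).updateRow (Sum.inl u) ((Matrix.fromBlocks A 0 0 B) (Sum.inl u) + ((-α) • (Pi.single (Sum.inl u) 1 : (V₁ ⊕ V₂) → ℝ) + (-(1 - α)) • (Pi.single (Sum.inr v) 1 : (V₁ ⊕ V₂) → ℝ)))).updateRow (Sum.inr v) (Pi.single (Sum.inr v) 1 : (V₁ ⊕ V₂) → ℝ)).det
      = A.det * (B.submatrix (fun x : {x : V₂ // x ≠ v} => (x : V₂)) (fun x : {x : V₂ // x ≠ v} => (x : V₂))).det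
        + (-α) * ((A.submatrix (fun x : {x : V₁ // x ≠ u} => (x : V₁)) (fun x : {x : V₁ // x ≠ u} => (x : V₁))).det * (B.submatrix (fun x : {x : V₂ // x ≠ v} => (x : V₂)) (fun x : {x : V₂ // x ≠ v} => (x : V₂))).det) := by
    rw [updRow_comm (Matrix.fromBlocks A 0 0 B) hne]
    have hrow : (Matrix.fromBlocks A 0 0 B) (Sum.inl u) = ((Matrix.fromBlocks A 0 0 B).updateRow (Sum.inr v) (Pi.single (Sum.inr v) 1 : (V₁ ⊕ V₂) → ℝ)) (Sum.inl u) :=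
      (Matrix.updateRow_ne hne).symm
    rw [hrow, expand, det_delR]
    have z3 : (((Matrix.fromBlocks A 0 0 B).updateRow (Sum.inr v) (Pi.single (Sum.inr v) 1 : (V₁ ⊕ V₂) → ℝ)).updateRow (Sum.inl u) (Pi.single (Sum.inl u) 1 : (V₁ ⊕ V₂) → ℝ)).det
        = (A.submatrix (fun x : {x : V₁ // x ≠ u} => (x : V₁)) (fun x : {x : V₁ // x ≠ u} => (x : V₁))).det * (B.submatrix (fun x : {x : V₂ // x ≠ v} => (x : V₂)) (fun x : {x : V₂ // x ≠ v} => (x : V₂))).det := by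
      rw [updRow_comm (Matrix.fromBlocks A 0 0 B) hne']
      exact det_delLR A B u v
    have z4 : (((Matrix.fromBlocks A 0 0 B).updateRow (Sum.inr v) (Pi.single (Sum.inr v) 1 : (V₁ ⊕ V₂) → ℝ)).updateRow (Sum.inl u) (Pi.single (Sum.inr v) 1 : (V₁ ⊕ V₂) → ℝ)).det = 0 := by
      apply Matrix.det_zero_of_row_eq hne
      rw [Matrix.updateRow_self, Matrix.updateRow_ne hne', Matrix.updateRow_self]
    rw [z3, z4]
    ring
  rw [d1, d2, d3, hAu, hBv]
  ring
end
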